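/- arXiv:2511.12358 — 2 statements merged into one kernel-verified Lean document; each statement's English description precedes it below -/
import Mathlib

section
/- Let v be a Sturmian sequence over a two-letter alphabet {a, b}, let c be a letter distinct from a and b, and let u = π(v), i.e., u(2i) = v(i) and u(2i+1) = c for all i ∈ ℕ. Then r_u(n+2) = r_u(n) + 1 for every n ∈ ℕ. -/
namespace ReflPaper

variable {A : Type*}

/-- The factor of `u` of length `n` at position `i`: `u(i) u(i+1) ⋯ u(i+n-1)`. -/
def factorAt (u : ℕ → A) (n i : ℕ) : List A :=
  (List.range n).map (fun k => u (i + k))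

/-- The word `w` occurs in the sequence `u` at position `i`. -/
def OccursAt (u : ℕ → A) (w : List A) (i : ℕ) : Prop :=
  w = factorAt u w.length i

/-- The language of `u`: the set of all factors of `u`. -/
def Lang (u : ℕ → A) : Set (List A) := {w | ∃ i, OccursAt u w i}

/-- The set of factors of `u` of length `n`. -/
def LangN (u : ℕ → A) (n : ℕ) : Set (List A) := {w | w.length = n ∧ w ∈ Lang u}

/-- The word `w` occurs infinitely many times in `u`. -/
def OccursInf (u : ℕ → A) (w : List A) : Prop := {i | OccursAt u w i}.Infinite

/-- `u` is eventually periodic. -/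
def EventuallyPeriodic (u : ℕ → A) : Prop :=
  ∃ N p : ℕ, 1 ≤ p ∧ ∀ i, N ≤ i → u (i + p) = u i

/-- Two words are reflectively equivalent if one equals the other or its reversal. -/
def ReflEquiv (w v : List A) : Prop := w = v ∨ w = v.reverse

/-- Reflective equivalence as a setoid on words. -/
def reflSetoid (A : Type*) : Setoid (List A) where
  r := ReflEquiv
  iseqv := by
    constructor
    · intro w; exact Or.inl rfl
    · intro w v h
      rcases h with h | h
      · exact Or.inl h.symm
      · subst h; simp [ReflEquiv]
    · intro w v x h1 h2
      rcases h1 with h1 | h1 <;> rcases h2 with h2 | h2 <;> subst h1 <;>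
        simp [ReflEquiv, h2]

/-- The number of reflective-equivalence classes of words in a set `S`. -/
noncomputable def nClasses (S : Set (List A)) : ℕ :=
  Set.ncard (Quotient.mk (reflSetoid A) '' S)

/-- The reflection complexity `r_u(n)`. -/
noncomputable def reflComplexity (u : ℕ → A) (n : ℕ) : ℕ := nClasses (LangN u n)

/-- The factor complexity `C_u(n) = #L_n(u)`. -/
noncomputable def factorComplexity (u : ℕ → A) (n : ℕ) : ℕ := (LangN u n).ncard

/-- The palindromic complexity `P_u(n)`. -/
noncomputable def palComplexity (u : ℕ → A) (n : ℕ) : ℕ :=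
  Set.ncard {w ∈ LangN u n | w.reverse = w}

/-- Both-sided extensions of `w` in the language of `u`. -/
def Bext (u : ℕ → A) (w : List A) : Set (List A) :=
  {x ∈ Lang u | ∃ a b : A, x = a :: (w ++ [b])}

/-- Right extensions of `w` in the language of `u`. -/
def Rext (u : ℕ → A) (w : List A) : Set (List A) :=
  {x ∈ Lang u | ∃ a : A, x = w ++ [a]}

/-- `T(w)`: the number of reflective-equivalence classes of `Bext(w) ∪ Bext(w̄)`. -/
noncomputable def TT (u : ℕ → A) (w : List A) : ℕ :=
  nClasses (Bext u w ∪ Bext u w.reverse)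

/-- `w` is a right special factor of `u`. -/
def RightSpecial (u : ℕ → A) (w : List A) : Prop :=
  ∃ a b : A, a ≠ b ∧ w ++ [a] ∈ Lang u ∧ w ++ [b] ∈ Lang u

/-- `w` is a left special factor of `u`. -/
def LeftSpecial (u : ℕ → A) (w : List A) : Prop :=
  ∃ a b : A, a ≠ b ∧ a :: w ∈ Lang u ∧ b :: w ∈ Lang u

/-- `u` is Sturmian: `C_u(n) = n + 1` for all `n`. -/
def Sturmian (u : ℕ → A) : Prop := ∀ n, factorComplexity u n = n + 1

/-- `u` is quasi-Sturmian: `C_u(n) = n + c` eventually. -/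
def QuasiSturmian (u : ℕ → A) : Prop :=
  ∃ n₀ c : ℕ, ∀ n, n₀ ≤ n → factorComplexity u n = n + c


/-! ### Auxiliary basics -/

section AuxBasics

variable {A : Type*}

attribute [local instance] Classical.propDecidable

lemma length_factorAt (u : ℕ → A) (n i : ℕ) : (factorAt u n i).length = n := by
  simp [factorAt]

lemma getElem_factorAt (u : ℕ → A) {n k : ℕ} (i : ℕ) (h : k < n) :
    (factorAt u n i)[k]'(by simpa [factorAt] using h) = u (i + k) := by
  simp [factorAt]

lemma factorAt_concat (u : ℕ → A) (n i : ℕ) :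
    factorAt u (n + 1) i = factorAt u n i ++ [u (i + n)] := by
  simp [factorAt, List.range_succ]

lemma factorAt_cons (u : ℕ → A) (n i : ℕ) :
    factorAt u (n + 1) i = u i :: factorAt u n (i + 1) := by
  simp only [factorAt, List.range_succ_eq_map, List.map_cons, List.map_map]
  refine congrArg₂ _ (by simp) ?_
  apply List.map_congr_left
  intro k _
  simp [Function.comp]
  congr 1
  omega

lemma factorAt_ext {u : ℕ → A} {n i j : ℕ}
    (h : ∀ k, k < n → u (i + k) = u (j + k)) : factorAt u n i = factorAt u n j := by
  apply List.ext_getElem (by simp [factorAt])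
  intro k h1 h2
  rw [getElem_factorAt u i (by simpa [factorAt] using h1),
    getElem_factorAt u j (by simpa [factorAt] using h1)]
  exact h k (by simpa [factorAt] using h1)

lemma factorAt_entry_eq {u : ℕ → A} {n i j : ℕ} (h : factorAt u n i = factorAt u n j)
    {k : ℕ} (hk : k < n) : u (i + k) = u (j + k) := by
  rw [← getElem_factorAt u i hk, ← getElem_factorAt u j hk]
  exact List.getElem_of_eq h _

lemma factorAt_sub {u : ℕ → A} {M i j : ℕ} (h : factorAt u M i = factorAt u M j)
    {s k : ℕ} (hsk : s + k ≤ M) : factorAt u k (i + s) = factorAt u k (j + s) := by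
  apply factorAt_ext
  intro t ht
  have : u (i + (s + t)) = u (j + (s + t)) := factorAt_entry_eq h (by omega)
  simpa [Nat.add_assoc] using this

lemma factorAt_mem_Lang (u : ℕ → A) (n i : ℕ) : factorAt u n i ∈ Lang u :=
  ⟨i, by simp [OccursAt, length_factorAt]⟩

lemma factorAt_mem_LangN (u : ℕ → A) (n i : ℕ) : factorAt u n i ∈ LangN u n :=
  ⟨length_factorAt u n i, factorAt_mem_Lang u n i⟩

lemma mem_LangN_iff {u : ℕ → A} {n : ℕ} {w : List A} :
    w ∈ LangN u n ↔ ∃ i, w = factorAt u n i := by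
  constructor
  · rintro ⟨hl, i, hw⟩
    exact ⟨i, by rw [hw, hl]⟩
  · rintro ⟨i, rfl⟩
    exact factorAt_mem_LangN u n i

lemma mem_Lang_iff {u : ℕ → A} {w : List A} :
    w ∈ Lang u ↔ ∃ i, w = factorAt u w.length i := Iff.rfl

lemma mem_LangN_self {u : ℕ → A} {w : List A} (h : w ∈ Lang u) : w ∈ LangN u w.length :=
  ⟨rfl, h⟩

lemma LangN_zero (u : ℕ → A) : LangN u 0 = {([] : List A)} := by
  ext w
  constructor
  · rintro ⟨hl, -⟩
    simpa [List.length_eq_zero_iff] using hl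
  · rintro rfl
    exact ⟨rfl, 0, by simp [OccursAt, factorAt]⟩

lemma tail_mem_LangN {u : ℕ → A} {n : ℕ} {w : List A} (h : w ∈ LangN u (n + 1)) :
    w.tail ∈ LangN u n := by
  obtain ⟨i, rfl⟩ := mem_LangN_iff.1 h
  rw [factorAt_cons]
  exact factorAt_mem_LangN u n (i + 1)

lemma dropLast_mem_LangN {u : ℕ → A} {n : ℕ} {w : List A} (h : w ∈ LangN u (n + 1)) :
    w.dropLast ∈ LangN u n := by
  obtain ⟨i, rfl⟩ := mem_LangN_iff.1 h
  rw [factorAt_concat]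
  simpa using factorAt_mem_LangN u n i

lemma exists_cons_of_mem {u : ℕ → A} {n : ℕ} {w : List A} (h : w ∈ LangN u (n + 1)) :
    ∃ (x : A) (w' : List A), w = x :: w' ∧ w' ∈ LangN u n := by
  obtain ⟨i, rfl⟩ := mem_LangN_iff.1 h
  exact ⟨u i, factorAt u n (i + 1), factorAt_cons u n i, factorAt_mem_LangN u n (i + 1)⟩

lemma exists_concat_of_mem {u : ℕ → A} {n : ℕ} {w : List A} (h : w ∈ LangN u (n + 1)) :
    ∃ (w' : List A) (y : A), w = w' ++ [y] ∧ w' ∈ LangN u n := by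
  obtain ⟨i, rfl⟩ := mem_LangN_iff.1 h
  exact ⟨factorAt u n i, u (i + n), factorAt_concat u n i, factorAt_mem_LangN u n i⟩

lemma exists_mid_of_mem {u : ℕ → A} {n : ℕ} {w : List A} (h : w ∈ LangN u (n + 2)) :
    ∃ (x y : A) (m : List A), w = x :: m ++ [y] ∧ m ∈ LangN u n ∧
      x :: m ∈ LangN u (n + 1) ∧ m ++ [y] ∈ LangN u (n + 1) := by
  obtain ⟨i, rfl⟩ := mem_LangN_iff.1 h
  refine ⟨u i, u (i + 1 + n), factorAt u n (i + 1), ?_, factorAt_mem_LangN u n (i + 1), ?_, ?_⟩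
  · rw [factorAt_cons, factorAt_concat, List.cons_append]
  · rw [← factorAt_cons]
    have : i + 1 + n = i + (n + 1) := by omega
    exact factorAt_mem_LangN u (n + 1) i
  · rw [← factorAt_concat]
    exact factorAt_mem_LangN u (n + 1) (i + 1)

lemma extend_right_mem {u : ℕ → A} {n : ℕ} {w : List A} (h : w ∈ LangN u n) :
    ∃ γ : A, w ++ [γ] ∈ LangN u (n + 1) := by
  obtain ⟨i, rfl⟩ := mem_LangN_iff.1 h
  exact ⟨u (i + n), by rw [← factorAt_concat]; exact factorAt_mem_LangN u (n + 1) i⟩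

lemma finite_length_eq (A : Type*) [Finite A] (n : ℕ) : {l : List A | l.length = n}.Finite := by
  induction n with
  | zero =>
    have : {l : List A | l.length = 0} = {[]} := by
      ext l; simp [List.length_eq_zero_iff]
    rw [this]; exact Set.finite_singleton _
  | succ n ih =>
    have hsub : {l : List A | l.length = n + 1} ⊆
        Set.image2 List.cons Set.univ {l : List A | l.length = n} := by
      intro l hl
      match l with
      | x :: t => exact Set.mem_image2_of_mem (Set.mem_univ x) (by simpa using hl)
    exact (Set.Finite.image2 _ (Set.finite_univ) ih).subset hsub

lemma finite_LangN [Finite A] (u : ℕ → A) (n : ℕ) : (LangN u n).Finite :=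
  (finite_length_eq A n).subset (fun _ hw => hw.1)

lemma letters_mem {u : ℕ → A} {w : List A} (h : w ∈ Lang u) {x : A} (hx : x ∈ w) :
    ∃ i, x = u i := by
  obtain ⟨i, hw⟩ := mem_Lang_iff.1 h
  rw [hw] at hx
  simp only [factorAt, List.mem_map, List.mem_range] at hx
  obtain ⟨k, -, rfl⟩ := hx
  exact ⟨i + k, rfl⟩

end AuxBasics


/-! ### Counting infrastructure -/

section AuxCount

variable {A : Type*}

attribute [local instance] Classical.propDecidable

noncomputable def FN [Finite A] (u : ℕ → A) (n : ℕ) : Finset (List A) :=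
  (finite_LangN u n).toFinset

lemma mem_FN [Finite A] {u : ℕ → A} {n : ℕ} {w : List A} :
    w ∈ FN u n ↔ w ∈ LangN u n := Set.Finite.mem_toFinset _

lemma card_FN [Finite A] (u : ℕ → A) (n : ℕ) : (FN u n).card = (LangN u n).ncard :=
  (Set.ncard_eq_toFinset_card _ _).symm

noncomputable def rextF [Finite A] (u : ℕ → A) (w : List A) : Finset A :=
  haveI := Fintype.ofFinite A
  Finset.univ.filter (fun γ => w ++ [γ] ∈ Lang u)

noncomputable def lextF [Finite A] (u : ℕ → A) (w : List A) : Finset A :=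
  haveI := Fintype.ofFinite A
  Finset.univ.filter (fun γ => γ :: w ∈ Lang u)

noncomputable def bextF [Finite A] (u : ℕ → A) (w : List A) : Finset (A × A) :=
  haveI := Fintype.ofFinite A
  Finset.univ.filter (fun p => p.1 :: w ++ [p.2] ∈ Lang u)

lemma mem_rextF [Finite A] {u : ℕ → A} {w : List A} {γ : A} :
    γ ∈ rextF u w ↔ w ++ [γ] ∈ Lang u := by
  simp [rextF]

lemma mem_lextF [Finite A] {u : ℕ → A} {w : List A} {γ : A} :
    γ ∈ lextF u w ↔ γ :: w ∈ Lang u := by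
  simp [lextF]

lemma mem_bextF [Finite A] {u : ℕ → A} {w : List A} {p : A × A} :
    p ∈ bextF u w ↔ p.1 :: w ++ [p.2] ∈ Lang u := by
  simp [bextF]

lemma rextF_nonempty [Finite A] {u : ℕ → A} {n : ℕ} {w : List A} (h : w ∈ LangN u n) :
    ∃ γ, γ ∈ rextF u w := by
  obtain ⟨γ, hγ⟩ := extend_right_mem h
  exact ⟨γ, mem_rextF.2 hγ.2⟩

lemma FN_succ_right [Finite A] (u : ℕ → A) (n : ℕ) :
    FN u (n + 1) = (FN u n).biUnion (fun w => (rextF u w).image (fun γ => w ++ [γ])) := by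
  ext W
  simp only [Finset.mem_biUnion, Finset.mem_image, mem_FN, mem_rextF]
  constructor
  · intro hW
    obtain ⟨w, γ, rfl, hw⟩ := exists_concat_of_mem hW
    exact ⟨w, hw, γ, hW.2, rfl⟩
  · rintro ⟨w, hw, γ, hγ, rfl⟩
    exact ⟨by simp [hw.1], hγ⟩

lemma FN_succ_left [Finite A] (u : ℕ → A) (n : ℕ) :
    FN u (n + 1) = (FN u n).biUnion (fun w => (lextF u w).image (fun γ => γ :: w)) := by
  ext W
  simp only [Finset.mem_biUnion, Finset.mem_image, mem_FN, mem_lextF]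
  constructor
  · intro hW
    obtain ⟨γ, w, rfl, hw⟩ := exists_cons_of_mem hW
    exact ⟨w, hw, γ, hW.2, rfl⟩
  · rintro ⟨w, hw, γ, hγ, rfl⟩
    exact ⟨by simp [hw.1], hγ⟩

lemma FN_mid [Finite A] (u : ℕ → A) (n : ℕ) :
    FN u (n + 2) = (FN u n).biUnion
      (fun m => (bextF u m).image (fun p => p.1 :: m ++ [p.2])) := by
  ext W
  simp only [Finset.mem_biUnion, Finset.mem_image, mem_FN, mem_bextF]
  constructor
  · intro hW
    obtain ⟨x, y, m, rfl, hm, -, -⟩ := exists_mid_of_mem hW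
    exact ⟨m, hm, (x, y), hW.2, rfl⟩
  · rintro ⟨m, hm, p, hp, rfl⟩
    refine ⟨by simp [hm.1], hp⟩

lemma card_sum_rext [Finite A] (u : ℕ → A) (n : ℕ) :
    (LangN u (n + 1)).ncard = ∑ w ∈ FN u n, (rextF u w).card := by
  rw [← card_FN, FN_succ_right]
  rw [Finset.card_biUnion]
  · refine Finset.sum_congr rfl (fun w _ => ?_)
    apply Finset.card_image_of_injective
    intro γ δ h
    simpa using h
  · intro w hw w' hw' hne
    simp only [Finset.disjoint_left, Finset.mem_image]
    rintro x ⟨γ, -, rfl⟩ ⟨δ, -, hx⟩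
    have hlen : w'.length = w.length := by
      rw [(mem_FN.1 hw).1, (mem_FN.1 hw').1]
    exact hne ((List.append_inj_left hx hlen).symm)

lemma card_sum_lext [Finite A] (u : ℕ → A) (n : ℕ) :
    (LangN u (n + 1)).ncard = ∑ w ∈ FN u n, (lextF u w).card := by
  rw [← card_FN, FN_succ_left]
  rw [Finset.card_biUnion]
  · refine Finset.sum_congr rfl (fun w _ => ?_)
    apply Finset.card_image_of_injective
    intro γ δ h
    simpa using h
  · intro w hw w' hw' hne
    simp only [Finset.disjoint_left, Finset.mem_image]
    rintro x ⟨γ, -, rfl⟩ ⟨δ, -, hx⟩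
    have : w' = w := by simpa using congrArg List.tail hx
    exact hne this.symm

lemma card_sum_bext [Finite A] (u : ℕ → A) (n : ℕ) :
    (LangN u (n + 2)).ncard = ∑ m ∈ FN u n, (bextF u m).card := by
  rw [← card_FN, FN_mid]
  rw [Finset.card_biUnion]
  · refine Finset.sum_congr rfl (fun m _ => ?_)
    apply Finset.card_image_of_injective
    rintro ⟨x, y⟩ ⟨x', y'⟩ h
    simp only [List.cons_append] at h
    injection h with h1 h2
    have h3 : [y] = [y'] := by
      have := List.append_inj_right h2 rfl
      simpa using this
    injection h3 with h4 h5
    simp [h1, h4]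
  · intro m hm m' hm' hne
    simp only [Finset.disjoint_left, Finset.mem_image]
    rintro x ⟨p, -, rfl⟩ ⟨q, -, hx⟩
    simp only [List.cons_append] at hx
    injection hx with h1 h2
    have hlen : m'.length = m.length := by
      rw [(mem_FN.1 hm).1, (mem_FN.1 hm').1]
    exact hne ((List.append_inj_left h2 hlen).symm)

/-- From a sum `∑ f = card + 1` with `1 ≤ f ≤ 2`, there is a unique element with `f = 2`. -/
lemma exists_unique_two {α : Type*} {s : Finset α} {f : α → ℕ}
    (h1 : ∀ x ∈ s, 1 ≤ f x) (h2 : ∀ x ∈ s, f x ≤ 2)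
    (hsum : ∑ x ∈ s, f x = s.card + 1) :
    ∃ z, (z ∈ s ∧ f z = 2) ∧ ∀ w, w ∈ s → f w = 2 → w = z := by
  classical
  have key : ∑ x ∈ s, f x = s.card + (s.filter (fun x => f x = 2)).card := by
    rw [Finset.card_filter, Finset.card_eq_sum_ones s, ← Finset.sum_add_distrib]
    refine Finset.sum_congr rfl (fun x hx => ?_)
    have ha := h1 x hx
    have hb := h2 x hx
    by_cases hfx : f x = 2
    · simp [hfx]
    · simp only [hfx, if_false]
      omega
  rw [key] at hsum
  have hcard : (s.filter (fun x => f x = 2)).card = 1 := by omega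
  obtain ⟨z, hz⟩ := Finset.card_eq_one.1 hcard
  refine ⟨z, ?_, ?_⟩
  · have : z ∈ s.filter (fun x => f x = 2) := hz ▸ Finset.mem_singleton_self z
    exact ⟨(Finset.mem_filter.1 this).1, (Finset.mem_filter.1 this).2⟩
  · intro w hw hfw
    have : w ∈ s.filter (fun x => f x = 2) := Finset.mem_filter.2 ⟨hw, hfw⟩
    rw [hz] at this
    exact Finset.mem_singleton.1 this

/-- From a sum `∑ f = card` with `1 ≤ f`, all values are 1. -/
lemma all_one_of_sum_eq_card {α : Type*} {s : Finset α} {f : α → ℕ}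
    (h1 : ∀ x ∈ s, 1 ≤ f x) (hsum : ∑ x ∈ s, f x = s.card) :
    ∀ x ∈ s, f x = 1 := by
  classical
  by_contra hc
  push_neg at hc
  obtain ⟨x0, hx0, hfx0⟩ := hc
  have hlt : ∑ _x ∈ s, (1 : ℕ) < ∑ x ∈ s, f x :=
    Finset.sum_lt_sum (fun i hi => h1 i hi)
      ⟨x0, hx0, by have := h1 x0 hx0; omega⟩
  rw [Finset.sum_const, smul_eq_mul, mul_one] at hlt
  omega

end AuxCount


/-! ### Morse–Hedlund, aperiodicity, recurrence -/

section AuxMH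

variable {A : Type*}

attribute [local instance] Classical.propDecidable

lemma ncard_LangN_zero (u : ℕ → A) : (LangN u 0).ncard = 1 := by
  rw [LangN_zero]; simp

lemma factorAt_idx_congr (u : ℕ → A) (k : ℕ) {i j : ℕ} (h : i = j) :
    factorAt u k i = factorAt u k j := by rw [h]

lemma morse_hedlund [Finite A] (x : ℕ → A) (n₀ : ℕ)
    (h : (LangN x n₀).ncard ≤ n₀) : EventuallyPeriodic x := by
  have hex : ∃ k, (LangN x (k + 1)).ncard ≤ (LangN x k).ncard := by
    by_contra hc
    push_neg at hc
    have grow : ∀ k, k ≤ n₀ → k + 1 ≤ (LangN x k).ncard := by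
      intro k
      induction k with
      | zero => intro _; simp [ncard_LangN_zero x]
      | succ k ih =>
        intro hk
        have h1 := hc k
        have h2 := ih (by omega)
        omega
    have := grow n₀ le_rfl
    omega
  obtain ⟨k, hle⟩ := hex
  have hge1 : ∀ w ∈ FN x k, 1 ≤ (rextF x w).card := by
    intro w hw
    obtain ⟨γ, hγ⟩ := rextF_nonempty (mem_FN.1 hw)
    exact Finset.card_pos.2 ⟨γ, hγ⟩
  have hsum : ∑ w ∈ FN x k, (rextF x w).card = (FN x k).card := by
    have h1 := card_sum_rext x k
    have h3 := card_FN x k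
    have h2 : (FN x k).card ≤ ∑ w ∈ FN x k, (rextF x w).card := by
      calc (FN x k).card = ∑ _w ∈ FN x k, 1 := by
            rw [Finset.card_eq_sum_ones]
        _ ≤ _ := Finset.sum_le_sum hge1
    omega
  have hone := all_one_of_sum_eq_card hge1 hsum
  have key : ∀ i' j', factorAt x k i' = factorAt x k j' → x (i' + k) = x (j' + k) := by
    intro i' j' he
    have hmem : factorAt x k i' ∈ FN x k := mem_FN.2 (factorAt_mem_LangN x k i')
    have hγ : x (i' + k) ∈ rextF x (factorAt x k i') :=
      mem_rextF.2 (by rw [← factorAt_concat]; exact factorAt_mem_Lang x (k + 1) i')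
    have hδ : x (j' + k) ∈ rextF x (factorAt x k i') :=
      mem_rextF.2 (by rw [he, ← factorAt_concat]; exact factorAt_mem_Lang x (k + 1) j')
    exact Finset.card_le_one.1 (le_of_eq (hone _ hmem)) _ hγ _ hδ
  have hpig : ∃ i j : ℕ, i ≠ j ∧ factorAt x k i = factorAt x k j := by
    haveI : Finite {l : List A // l.length = k} := by
      have := (finite_length_eq A k).to_subtype
      exact this
    obtain ⟨i, j, hne, hf⟩ := Finite.exists_ne_map_eq_of_infinite
      (fun i : ℕ => (⟨factorAt x k i, length_factorAt x k i⟩ : {l : List A // l.length = k}))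
    exact ⟨i, j, hne, by simpa using congrArg Subtype.val hf⟩
  obtain ⟨i0, j0, hne, hf⟩ := hpig
  obtain ⟨i, j, hij, hfij⟩ : ∃ i j, i < j ∧ factorAt x k i = factorAt x k j := by
    rcases lt_or_gt_of_ne hne with h | h
    · exact ⟨i0, j0, h, hf⟩
    · exact ⟨j0, i0, h, hf.symm⟩
  have prop : ∀ s, factorAt x k (i + s) = factorAt x k (j + s) := by
    intro s
    induction s with
    | zero => simpa using hfij
    | succ s ih =>
      have hl := key _ _ ih
      have h2 : factorAt x (k + 1) (i + s) = factorAt x (k + 1) (j + s) := by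
        rw [factorAt_concat, factorAt_concat, ih, hl]
      have h3 := congrArg List.tail h2
      rw [factorAt_cons, factorAt_cons] at h3
      simp only [List.tail_cons] at h3
      rw [factorAt_idx_congr x k (show i + s + 1 = i + (s + 1) by omega),
        factorAt_idx_congr x k (show j + s + 1 = j + (s + 1) by omega)] at h3
      exact h3
  refine ⟨i + k, j - i, by omega, ?_⟩
  intro m hm
  set s := m - i - k with hs
  have hm' : m = i + s + k := by omega
  have e : m + (j - i) = j + s + k := by omega
  rw [e, hm']
  exact (key _ _ (prop s)).symm

lemma complexity_bounded_of_evp [Finite A] (x : ℕ → A) (h : EventuallyPeriodic x) :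
    ∃ B, ∀ k, (LangN x k).ncard ≤ B := by
  obtain ⟨N, p, hp, hper⟩ := h
  refine ⟨N + p, fun k => ?_⟩
  have find : ∀ i, ∃ i', i' < N + p ∧ factorAt x k i' = factorAt x k i := by
    intro i
    induction i using Nat.strong_induction_on with
    | _ i ih =>
      by_cases hi : i < N + p
      · exact ⟨i, hi, rfl⟩
      · have h2 : factorAt x k (i - p) = factorAt x k i := by
          apply factorAt_ext
          intro t ht
          have h3 := hper (i - p + t) (by omega)
          have h4 : i - p + t + p = i + t := by omega
          rw [h4] at h3
          exact h3.symm
        obtain ⟨i', hi', he⟩ := ih (i - p) (by omega)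
        exact ⟨i', hi', he.trans h2⟩
  have hsub : LangN x k ⊆ ↑((Finset.range (N + p)).image (fun i => factorAt x k i)) := by
    intro w hw
    obtain ⟨i, rfl⟩ := mem_LangN_iff.1 hw
    obtain ⟨i', hi', he⟩ := find i
    simp only [Finset.coe_image, Finset.coe_range, Set.mem_image, Set.mem_Iio]
    exact ⟨i', hi', he⟩
  calc (LangN x k).ncard ≤ _ :=
        Set.ncard_le_ncard hsub ((Finset.range (N + p)).image _).finite_toSet
    _ = ((Finset.range (N + p)).image (fun i => factorAt x k i)).card :=
        Set.ncard_coe_finset _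
    _ ≤ (Finset.range (N + p)).card := Finset.card_image_le
    _ = N + p := Finset.card_range _

lemma sturmian_not_evp [Finite A] {v : ℕ → A} (hst : Sturmian v) :
    ¬ EventuallyPeriodic v := by
  intro h
  obtain ⟨B, hB⟩ := complexity_bounded_of_evp v h
  have h1 := hB (B + 1)
  have h2 : (LangN v (B + 1)).ncard = B + 2 := hst (B + 1)
  omega

lemma sturmian_recurrent [Finite A] {v : ℕ → A} (hst : Sturmian v) :
    ∀ w ∈ Lang v, ∀ N, ∃ i, N ≤ i ∧ w = factorAt v w.length i := by
  intro w hw N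
  by_contra hc
  push_neg at hc
  set x := fun i => v (N + i) with hx
  have hxfac : ∀ k i, factorAt x k i = factorAt v k (N + i) := by
    intro k i
    show (List.range k).map (fun t => v (N + (i + t))) =
      (List.range k).map (fun t => v (N + i + t))
    apply List.map_congr_left
    intro t _
    rw [show N + (i + t) = N + i + t by omega]
  have hsub : LangN x w.length ⊆ LangN v w.length \ {w} := by
    intro y hy
    obtain ⟨i, hyi⟩ := mem_LangN_iff.1 hy
    constructor
    · rw [hyi, hxfac]
      exact factorAt_mem_LangN v _ (N + i)
    · intro hmem
      rw [Set.mem_singleton_iff] at hmem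
      exact hc (N + i) (by omega) ((hmem.symm.trans hyi).trans (hxfac w.length i))
  have hle : (LangN x w.length).ncard ≤ w.length := by
    have h1 : (LangN v w.length \ {w}).ncard = w.length := by
      rw [Set.ncard_diff_singleton_of_mem (mem_LangN_self hw)]
      have h2 : (LangN v w.length).ncard = w.length + 1 := hst w.length
      omega
    exact le_trans (Set.ncard_le_ncard hsub ((finite_LangN v _).diff)) (le_of_eq h1)
  obtain ⟨N', p, hp, hper⟩ := morse_hedlund x w.length hle
  apply sturmian_not_evp hst
  refine ⟨N + N', p, hp, ?_⟩
  intro m hm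
  have h5 : x (m - N + p) = x (m - N) := hper (m - N) (by omega)
  show v (m + p) = v m
  have e1 : N + (m - N + p) = m + p := by omega
  have e2 : N + (m - N) = m := by omega
  have h6 : v (N + (m - N + p)) = v (N + (m - N)) := h5
  rw [e1, e2] at h6
  exact h6

end AuxMH


/-! ### Sturmian context: special factors -/

section AuxSpecial

variable {A : Type*}

attribute [local instance] Classical.propDecidable

/-- Bundled context: a Sturmian sequence over the two-letter alphabet `{a,b}`. -/
structure SCtx (A : Type*) where
  v : ℕ → A
  a : A
  b : A
  hab : a ≠ b
  hv : ∀ i, v i = a ∨ v i = b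
  hst : Sturmian v

namespace SCtx

variable [Finite A] (C : SCtx A)

lemma hC (n : ℕ) : (LangN C.v n).ncard = n + 1 := C.hst n

lemma letter_ab {w : List A} (h : w ∈ Lang C.v) {x : A} (hx : x ∈ w) :
    x = C.a ∨ x = C.b := by
  obtain ⟨i, rfl⟩ := letters_mem h hx
  exact C.hv i

lemma rextF_sub (w : List A) : rextF C.v w ⊆ {C.a, C.b} := by
  intro γ hγ
  have h1 := mem_rextF.1 hγ
  have := C.letter_ab h1 (by simp : γ ∈ w ++ [γ])
  simpa using this

lemma lextF_sub (w : List A) : lextF C.v w ⊆ {C.a, C.b} := by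
  intro γ hγ
  have h1 := mem_lextF.1 hγ
  have := C.letter_ab h1 (by simp : γ ∈ γ :: w)
  simpa using this

lemma card_ab : ({C.a, C.b} : Finset A).card = 2 := by
  rw [Finset.card_insert_of_notMem (by simpa using C.hab), Finset.card_singleton]

lemma rextF_card_le (w : List A) : (rextF C.v w).card ≤ 2 := by
  calc (rextF C.v w).card ≤ ({C.a, C.b} : Finset A).card :=
        Finset.card_le_card (C.rextF_sub w)
    _ = 2 := C.card_ab

lemma lextF_card_le (w : List A) : (lextF C.v w).card ≤ 2 := by
  calc (lextF C.v w).card ≤ ({C.a, C.b} : Finset A).card :=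
        Finset.card_le_card (C.lextF_sub w)
    _ = 2 := C.card_ab

lemma rextF_card_pos {n : ℕ} {w : List A} (h : w ∈ LangN C.v n) :
    1 ≤ (rextF C.v w).card := by
  obtain ⟨γ, hγ⟩ := rextF_nonempty h
  exact Finset.card_pos.2 ⟨γ, hγ⟩

lemma occurs_ge {w : List A} (h : w ∈ Lang C.v) (N : ℕ) :
    ∃ i, N ≤ i ∧ w = factorAt C.v w.length i :=
  sturmian_recurrent C.hst w h N

lemma occursN_ge {n : ℕ} {w : List A} (h : w ∈ LangN C.v n) (N : ℕ) :
    ∃ i, N ≤ i ∧ w = factorAt C.v n i := by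
  obtain ⟨i, hi, hocc⟩ := C.occurs_ge h.2 N
  rw [h.1] at hocc
  exact ⟨i, hi, hocc⟩

lemma lextF_card_pos {n : ℕ} {w : List A} (h : w ∈ LangN C.v n) :
    1 ≤ (lextF C.v w).card := by
  obtain ⟨i, hi, hocc⟩ := C.occursN_ge h 1
  have h2 : C.v (i - 1) :: w ∈ Lang C.v := by
    have h3 : factorAt C.v (n + 1) (i - 1) = C.v (i - 1) :: factorAt C.v n i := by
      have := factorAt_cons C.v n (i - 1)
      rwa [show i - 1 + 1 = i by omega] at this
    rw [hocc, ← h3]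
    exact factorAt_mem_Lang C.v (n + 1) (i - 1)
  exact Finset.card_pos.2 ⟨C.v (i - 1), mem_lextF.2 h2⟩

lemma urs (n : ℕ) : ∃ z ∈ LangN C.v n, (rextF C.v z).card = 2 ∧
    ∀ w ∈ LangN C.v n, ∀ γ δ, γ ∈ rextF C.v w → δ ∈ rextF C.v w → γ ≠ δ → w = z := by
  have hsum : ∑ w ∈ FN C.v n, (rextF C.v w).card = (FN C.v n).card + 1 := by
    have h1 := card_sum_rext C.v n
    have h2 := card_FN C.v n
    have h3 := C.hC n
    have h4 := C.hC (n + 1)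
    omega
  obtain ⟨z, ⟨hz1, hz2⟩, hz3⟩ := exists_unique_two
    (fun w hw => C.rextF_card_pos (mem_FN.1 hw)) (fun w _ => C.rextF_card_le w) hsum
  refine ⟨z, mem_FN.1 hz1, hz2, ?_⟩
  intro w hw γ δ hγ hδ hne
  apply hz3 w (mem_FN.2 hw)
  have hle := C.rextF_card_le w
  have h2 : 1 < (rextF C.v w).card := Finset.one_lt_card.2 ⟨γ, hγ, δ, hδ, hne⟩
  omega

lemma uls (n : ℕ) : ∃ z ∈ LangN C.v n, (lextF C.v z).card = 2 ∧
    ∀ w ∈ LangN C.v n, ∀ γ δ, γ ∈ lextF C.v w → δ ∈ lextF C.v w → γ ≠ δ → w = z := by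
  have hsum : ∑ w ∈ FN C.v n, (lextF C.v w).card = (FN C.v n).card + 1 := by
    have h1 := card_sum_lext C.v n
    have h2 := card_FN C.v n
    have h3 := C.hC n
    have h4 := C.hC (n + 1)
    omega
  obtain ⟨z, ⟨hz1, hz2⟩, hz3⟩ := exists_unique_two
    (fun w hw => C.lextF_card_pos (mem_FN.1 hw)) (fun w _ => C.lextF_card_le w) hsum
  refine ⟨z, mem_FN.1 hz1, hz2, ?_⟩
  intro w hw γ δ hγ hδ hne
  apply hz3 w (mem_FN.2 hw)
  have hle := C.lextF_card_le w
  have h2 : 1 < (lextF C.v w).card := Finset.one_lt_card.2 ⟨γ, hγ, δ, hδ, hne⟩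
  omega

lemma rextF_eq_ab {w : List A} (h : (rextF C.v w).card = 2) :
    rextF C.v w = {C.a, C.b} :=
  Finset.eq_of_subset_of_card_le (C.rextF_sub w) (by rw [C.card_ab, h])

lemma lextF_eq_ab {w : List A} (h : (lextF C.v w).card = 2) :
    lextF C.v w = {C.a, C.b} :=
  Finset.eq_of_subset_of_card_le (C.lextF_sub w) (by rw [C.card_ab, h])

lemma bext_three {n : ℕ} {z : List A} (hz : z ∈ LangN C.v n)
    (hls : (lextF C.v z).card = 2)
    (hu : ∀ w ∈ LangN C.v n, ∀ γ δ, γ ∈ rextF C.v w → δ ∈ rextF C.v w → γ ≠ δ → w = z) :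
    (bextF C.v z).card = 3 := by
  have hbl : ∀ m ∈ FN C.v n, m ≠ z → (bextF C.v m).card = (lextF C.v m).card := by
    intro m hm hne
    apply Finset.card_bij (fun (p : A × A) _ => p.1)
    · rintro ⟨x, y⟩ hp
      have h1 := mem_bextF.1 hp
      apply mem_lextF.2
      have h3 : x :: m ++ [y] ∈ LangN C.v (n + 2) :=
        ⟨by simp [(mem_FN.1 hm).1], h1⟩
      have h4 := dropLast_mem_LangN h3
      have h2 : (x :: m ++ [y]).dropLast = x :: m := by
        rw [List.cons_append, List.dropLast_cons_of_ne_nil (by simp)]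
        simp
      rw [h2] at h4
      exact h4.2
    · rintro ⟨x, y⟩ hp ⟨x', y'⟩ hq h
      simp only at h
      subst h
      have h1 : m ++ [y] ∈ Lang C.v := by
        have h3 : x :: m ++ [y] ∈ LangN C.v (n + 2) :=
          ⟨by simp [(mem_FN.1 hm).1], mem_bextF.1 hp⟩
        have h4 := tail_mem_LangN h3
        rw [List.cons_append, List.tail_cons] at h4
        exact h4.2
      have h1' : m ++ [y'] ∈ Lang C.v := by
        have h3 : x :: m ++ [y'] ∈ LangN C.v (n + 2) :=
          ⟨by simp [(mem_FN.1 hm).1], mem_bextF.1 hq⟩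
        have h4 := tail_mem_LangN h3
        rw [List.cons_append, List.tail_cons] at h4
        exact h4.2
      by_contra hne2
      have hyy : y ≠ y' := by
        intro hy
        exact hne2 (by rw [hy])
      exact hne (hu m (mem_FN.1 hm) y y' (mem_rextF.2 h1) (mem_rextF.2 h1') hyy)
    · intro γ hγ
      have h1 := mem_lextF.1 hγ
      have h2 : γ :: m ∈ LangN C.v (n + 1) := ⟨by simp [(mem_FN.1 hm).1], h1⟩
      obtain ⟨δ, hδ⟩ := extend_right_mem h2
      refine ⟨(γ, δ), ?_, rfl⟩
      apply mem_bextF.2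
      have := hδ.2
      simpa using this
  have hzmem : z ∈ FN C.v n := mem_FN.2 hz
  have hsl : (lextF C.v z).card + ∑ m ∈ (FN C.v n).erase z, (lextF C.v m).card = n + 2 := by
    have h1 := card_sum_lext C.v n
    have h2 := C.hC (n + 1)
    rw [← Finset.add_sum_erase _ _ hzmem] at h1
    omega
  have hsb : (bextF C.v z).card + ∑ m ∈ (FN C.v n).erase z, (bextF C.v m).card = n + 3 := by
    have h1 := card_sum_bext C.v n
    have h2 := C.hC (n + 2)
    rw [← Finset.add_sum_erase _ _ hzmem] at h1
    omega
  have heq : ∑ m ∈ (FN C.v n).erase z, (bextF C.v m).card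
      = ∑ m ∈ (FN C.v n).erase z, (lextF C.v m).card :=
    Finset.sum_congr rfl
      (fun m hm => hbl m (Finset.mem_of_mem_erase hm) (Finset.ne_of_mem_erase hm))
  rw [heq] at hsb
  omega

end SCtx

end AuxSpecial


/-! ### The bispecial analysis -/

section AuxBispecial

set_option linter.unusedSectionVars false
set_option maxHeartbeats 1000000

variable {A : Type*}

attribute [local instance] Classical.propDecidable

namespace SCtx

variable [Finite A] (C : SCtx A)

/-- Key lemma: at a bispecial palindromic factor `z`, both "off-diagonal" two-sided
extensions occur. -/
lemma bispecial_offdiag {n : ℕ} {z : List A}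
    (hz : z ∈ LangN C.v n)
    (hzr : rextF C.v z = {C.a, C.b})
    (hzl : lextF C.v z = {C.a, C.b})
    (hpal : z.reverse = z)
    (hur : ∀ w ∈ LangN C.v n, ∀ γ δ,
      γ ∈ rextF C.v w → δ ∈ rextF C.v w → γ ≠ δ → w = z)
    (hul : ∀ w ∈ LangN C.v n, ∀ γ δ,
      γ ∈ lextF C.v w → δ ∈ lextF C.v w → γ ≠ δ → w = z)
    (hrev1 : ∀ w ∈ LangN C.v (n + 1), w.reverse ∈ Lang C.v)
    (hpal1 : ∃ W ∈ LangN C.v (n + 1), W.reverse = W) :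
    ∀ α β : A, α ∈ ({C.a, C.b} : Finset A) → β ∈ ({C.a, C.b} : Finset A) → α ≠ β →
      (β :: z) ++ [α] ∈ Lang C.v := by
  classical
  have hzlen : z.length = n := hz.1
  have huniq : ∀ w ∈ LangN C.v n, w ≠ z → ∀ γ δ,
      w ++ [γ] ∈ Lang C.v → w ++ [δ] ∈ Lang C.v → γ = δ := by
    intro w hw hne γ δ h1 h2
    by_contra hgd
    exact hne (hur w hw γ δ (mem_rextF.2 h1) (mem_rextF.2 h2) hgd)
  have hluniq : ∀ w ∈ LangN C.v n, w ≠ z → ∀ γ δ,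
      γ :: w ∈ Lang C.v → δ :: w ∈ Lang C.v → γ = δ := by
    intro w hw hne γ δ h1 h2
    by_contra hgd
    exact hne (hul w hw γ δ (mem_lextF.2 h1) (mem_lextF.2 h2) hgd)
  have CD : ∀ t i j, factorAt C.v (n + 1) i = factorAt C.v (n + 1) j →
      (∀ s, 1 ≤ s → s ≤ t → factorAt C.v n (i + s) ≠ z) →
      factorAt C.v (n + 1 + t) i = factorAt C.v (n + 1 + t) j := by
    intro t
    induction t with
    | zero => intro i j h _; exact h
    | succ t ih =>
      intro i j h hnz
      have hprev := ih i j h (fun s h1 h2 => hnz s h1 (by omega))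
      have hwin : factorAt C.v n (i + (t + 1)) = factorAt C.v n (j + (t + 1)) :=
        factorAt_sub hprev (by omega)
      have hletter : C.v (i + (t + 1) + n) = C.v (j + (t + 1) + n) := by
        apply huniq (factorAt C.v n (i + (t + 1))) (factorAt_mem_LangN C.v n _)
          (hnz (t + 1) (by omega) le_rfl)
        · rw [← factorAt_concat]; exact factorAt_mem_Lang C.v (n + 1) (i + (t + 1))
        · rw [hwin, ← factorAt_concat]; exact factorAt_mem_Lang C.v (n + 1) (j + (t + 1))
      show factorAt C.v (n + 1 + t + 1) i = factorAt C.v (n + 1 + t + 1) j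
      rw [factorAt_concat C.v (n + 1 + t) i, factorAt_concat C.v (n + 1 + t) j, hprev,
        show i + (n + 1 + t) = i + (t + 1) + n by omega,
        show j + (n + 1 + t) = j + (t + 1) + n by omega, hletter]
  have hretex : ∀ q, ∃ T, 1 ≤ T ∧ factorAt C.v n (q + T) = z := by
    intro q
    obtain ⟨i, hi, hocc⟩ := C.occursN_ge hz (q + 1)
    exact ⟨i - q, by omega, by rw [show q + (i - q) = i by omega]; exact hocc.symm⟩
  let nxt : ℕ → ℕ := fun q => Nat.find (hretex q)
  have nxt_spec : ∀ q, 1 ≤ nxt q ∧ factorAt C.v n (q + nxt q) = z :=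
    fun q => Nat.find_spec (hretex q)
  have nxt_min : ∀ q s, 1 ≤ s → s < nxt q → factorAt C.v n (q + s) ≠ z := by
    intro q s h1 h2 hcon
    exact Nat.find_min (hretex q) h2 ⟨h1, hcon⟩
  have det : ∀ i j, factorAt C.v (n + 1) i = factorAt C.v (n + 1) j →
      nxt j = nxt i ∧ factorAt C.v (nxt i + n) i = factorAt C.v (nxt i + n) j := by
    intro i j h
    have hseg : factorAt C.v (n + 1 + (nxt i - 1)) i
        = factorAt C.v (n + 1 + (nxt i - 1)) j :=
      CD (nxt i - 1) i j h (fun s h1 h2 => nxt_min i s h1 (by have := (nxt_spec i).1; omega))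
    have hlen : n + 1 + (nxt i - 1) = nxt i + n := by
      have := (nxt_spec i).1; omega
    rw [hlen] at hseg
    have hji : factorAt C.v n (j + nxt i) = z := by
      have h2 := factorAt_sub hseg (s := nxt i) (k := n) (by omega)
      rw [← h2]; exact (nxt_spec i).2
    have h1 : nxt j ≤ nxt i := by
      by_contra hcon
      exact nxt_min j (nxt i) (nxt_spec i).1 (by omega) hji
    have h2 : nxt i ≤ nxt j := by
      by_contra hcon
      have hseg2 := factorAt_sub hseg (s := nxt j) (k := n)
        (by have := (nxt_spec i).1; omega)
      have h3 : factorAt C.v n (i + nxt j) = z := by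
        rw [hseg2]; exact (nxt_spec j).2
      exact nxt_min i (nxt j) (nxt_spec j).1 (by omega) h3
    exact ⟨le_antisymm h1 h2, hseg⟩
  have hbase : ∀ γ, z ++ [γ] ∈ Lang C.v → ∃ p, factorAt C.v (n + 1) p = z ++ [γ] := by
    intro γ h
    obtain ⟨i, -, hocc⟩ := C.occurs_ge h 0
    rw [show (z ++ [γ]).length = n + 1 by simp [hzlen]] at hocc
    exact ⟨i, hocc.symm⟩
  let pf : A → ℕ := fun γ => if h : z ++ [γ] ∈ Lang C.v then (hbase γ h).choose else 0
  have hpf : ∀ γ, (h : z ++ [γ] ∈ Lang C.v) → factorAt C.v (n + 1) (pf γ) = z ++ [γ] := by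
    intro γ h
    have h2 : pf γ = (hbase γ h).choose := dif_pos h
    rw [h2]
    exact (hbase γ h).choose_spec
  have F0 : ∀ γ, (h : z ++ [γ] ∈ Lang C.v) →
      factorAt C.v n (pf γ) = z ∧ C.v (pf γ + n) = γ := by
    intro γ h
    have h1 := hpf γ h
    rw [factorAt_concat] at h1
    constructor
    · exact List.append_inj_left h1 (by simp [length_factorAt, hzlen])
    · have h2 := List.append_inj_right h1 (by simp [length_factorAt, hzlen])
      simpa using h2
  let eps : A → A := fun γ => C.v (pf γ + (nxt (pf γ) - 1))
  -- the arrival edge, written in cons form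
  have harr : ∀ γ, (h : z ++ [γ] ∈ Lang C.v) →
      factorAt C.v (n + 1) (pf γ + (nxt (pf γ) - 1))
        = C.v (pf γ + (nxt (pf γ) - 1)) :: z := by
    intro γ h
    rw [factorAt_cons]
    have e2 : pf γ + (nxt (pf γ) - 1) + 1 = pf γ + nxt (pf γ) := by
      have := (nxt_spec (pf γ)).1; omega
    rw [e2, (nxt_spec (pf γ)).2]
  have occ_det : ∀ γ, (z ++ [γ] ∈ Lang C.v) → ∀ q, factorAt C.v (n + 1) q = z ++ [γ] →
      nxt q = nxt (pf γ) ∧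
      factorAt C.v (nxt (pf γ) + n) (pf γ) = factorAt C.v (nxt (pf γ) + n) q := by
    intro γ h q hq
    exact det (pf γ) q (by rw [hpf γ h, hq])
  have F3 : ∀ W ∈ LangN C.v (n + 1), ∃ γ s, (z ++ [γ] ∈ Lang C.v) ∧ s < nxt (pf γ) ∧
      W = factorAt C.v (n + 1) (pf γ + s) := by
    intro W hW
    obtain ⟨m0, -, hm0⟩ := C.occursN_ge hz 0
    obtain ⟨q0, hq0ge, hq0⟩ := C.occursN_ge hW m0
    have hPi : factorAt C.v n (Nat.findGreatest (fun s => factorAt C.v n s = z) q0) = z :=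
      Nat.findGreatest_spec (P := fun s => factorAt C.v n s = z) (m := m0) hq0ge hm0.symm
    set istar := Nat.findGreatest (fun s => factorAt C.v n s = z) q0 with histar
    have histar_le : istar ≤ q0 := Nat.findGreatest_le q0
    have hedge : factorAt C.v (n + 1) istar = z ++ [C.v (istar + n)] := by
      rw [factorAt_concat, hPi]
    have hγ'lang : z ++ [C.v (istar + n)] ∈ Lang C.v := by
      rw [← hedge]; exact factorAt_mem_Lang _ _ _
    have hnq : nxt istar = nxt (pf (C.v (istar + n))) :=
      (occ_det _ hγ'lang istar hedge).1
    have hslt : q0 - istar < nxt (pf (C.v (istar + n))) := by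
      rw [← hnq]
      by_contra hcon
      push_neg at hcon
      have hz2 : factorAt C.v n (istar + nxt istar) = z := (nxt_spec istar).2
      refine Nat.findGreatest_is_greatest (P := fun s => factorAt C.v n s = z) (n := q0)
        (k := istar + nxt istar) ?_ ?_ hz2
      · rw [← histar]
        have := (nxt_spec istar).1
        omega
      · omega
    refine ⟨C.v (istar + n), q0 - istar, hγ'lang, hslt, ?_⟩
    have hseg := (occ_det _ hγ'lang istar hedge).2
    have hsub := factorAt_sub hseg (s := q0 - istar) (k := n + 1) (by omega)
    rw [show istar + (q0 - istar) = q0 by omega] at hsub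
    exact hq0.trans hsub.symm
  have F4 : ∀ s γ δ s', (z ++ [γ] ∈ Lang C.v) → (z ++ [δ] ∈ Lang C.v) →
      s < nxt (pf γ) → s' < nxt (pf δ) →
      factorAt C.v (n + 1) (pf γ + s) = factorAt C.v (n + 1) (pf δ + s') →
      γ = δ ∧ s = s' := by
    intro s
    induction s using Nat.strong_induction_on with
    | _ s ih =>
      intro γ δ s' hγ hδ hs hs' he
      match s, s' with
      | 0, 0 =>
        refine ⟨?_, rfl⟩
        simp only [Nat.add_zero] at he
        rw [hpf γ hγ, hpf δ hδ] at he
        have h2 := List.append_inj_right he rfl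
        simpa using h2
      | 0, s' + 1 =>
        exfalso
        have hpre := factorAt_sub he (s := 0) (k := n) (by omega)
        simp only [Nat.add_zero] at hpre
        rw [(F0 γ hγ).1] at hpre
        exact nxt_min (pf δ) (s' + 1) (by omega) (by omega) hpre.symm
      | s + 1, 0 =>
        exfalso
        have hpre := factorAt_sub he (s := 0) (k := n) (by omega)
        simp only [Nat.add_zero] at hpre
        rw [(F0 δ hδ).1] at hpre
        exact nxt_min (pf γ) (s + 1) (by omega) (by omega) hpre
      | s + 1, s' + 1 =>
        have hpre : factorAt C.v n (pf γ + (s + 1)) = factorAt C.v n (pf δ + (s' + 1)) := by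
          have h0 := factorAt_sub he (s := 0) (k := n) (by omega)
          simpa only [Nat.add_zero] using h0
        have hynez : factorAt C.v n (pf γ + (s + 1)) ≠ z :=
          nxt_min _ _ (by omega) (by omega)
        have hXγ : factorAt C.v (n + 1) (pf γ + s)
            = C.v (pf γ + s) :: factorAt C.v n (pf γ + (s + 1)) := by
          rw [factorAt_cons, show pf γ + s + 1 = pf γ + (s + 1) by omega]
        have hXδ : factorAt C.v (n + 1) (pf δ + s')
            = C.v (pf δ + s') :: factorAt C.v n (pf δ + (s' + 1)) := by
          rw [factorAt_cons, show pf δ + s' + 1 = pf δ + (s' + 1) by omega]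
        have hlet : C.v (pf γ + s) = C.v (pf δ + s') := by
          apply hluniq (factorAt C.v n (pf γ + (s + 1))) (factorAt_mem_LangN _ _ _) hynez
          · rw [← hXγ]; exact factorAt_mem_Lang _ _ _
          · rw [hpre, ← hXδ]; exact factorAt_mem_Lang _ _ _
        have hXeq : factorAt C.v (n + 1) (pf γ + s) = factorAt C.v (n + 1) (pf δ + s') := by
          rw [hXγ, hXδ, hlet, hpre]
        obtain ⟨h1, h2⟩ := ih s (by omega) γ δ s' hγ hδ (by omega) (by omega) hXeq
        exact ⟨h1, by omega⟩
  have hepsz : ∀ γ, (z ++ [γ] ∈ Lang C.v) →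
      (eps γ :: z ∈ Lang C.v) ∧ z ++ [eps γ] ∈ Lang C.v := by
    intro γ h
    have h1 : eps γ :: z ∈ Lang C.v := by
      rw [show eps γ :: z = factorAt C.v (n + 1) (pf γ + (nxt (pf γ) - 1))
        from (harr γ h).symm]
      exact factorAt_mem_Lang _ _ _
    refine ⟨h1, ?_⟩
    have h2 := hrev1 (eps γ :: z) ⟨by simp [hzlen], h1⟩
    rw [List.reverse_cons, hpal] at h2
    exact h2
  have F5 : ∀ γ, (z ++ [γ] ∈ Lang C.v) → ∀ s, s < nxt (pf γ) →
      s < nxt (pf (eps γ)) ∧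
      factorAt C.v (n + 1) (pf (eps γ) + s)
        = (factorAt C.v (n + 1) (pf γ + (nxt (pf γ) - 1 - s))).reverse := by
    intro γ hγ s
    induction s using Nat.strong_induction_on with
    | _ s ih =>
      intro hs
      match s with
      | 0 =>
        refine ⟨(nxt_spec _).1, ?_⟩
        simp only [Nat.add_zero, Nat.sub_zero]
        rw [hpf (eps γ) (hepsz γ hγ).2, harr γ hγ, List.reverse_cons, hpal]
      | s + 1 =>
        obtain ⟨ihb, ihe⟩ := ih s (by omega) (by omega)
        have hiii : factorAt C.v n (pf (eps γ) + (s + 1))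
            = (factorAt C.v n (pf γ + (nxt (pf γ) - 1 - s))).reverse := by
          have h1 := ihe
          rw [factorAt_cons C.v n (pf (eps γ) + s),
            factorAt_concat C.v n (pf γ + (nxt (pf γ) - 1 - s)),
            List.reverse_append] at h1
          simp only [List.reverse_singleton, List.singleton_append] at h1
          have h4 := congrArg List.tail h1
          simp only [List.tail_cons] at h4
          rw [show pf (eps γ) + (s + 1) = pf (eps γ) + s + 1 by omega]
          exact h4
        have hwγnez : factorAt C.v n (pf γ + (nxt (pf γ) - 1 - s)) ≠ z :=
          nxt_min _ _ (by omega) (by omega)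
        have hynez : factorAt C.v n (pf (eps γ) + (s + 1)) ≠ z := by
          rw [hiii]
          intro hcon
          apply hwγnez
          have h4 := congrArg List.reverse hcon
          rwa [List.reverse_reverse, hpal] at h4
        have hbound : s + 1 < nxt (pf (eps γ)) := by
          by_contra hcon
          have hs1 : s + 1 = nxt (pf (eps γ)) := by omega
          apply hynez
          rw [hs1]
          exact (nxt_spec (pf (eps γ))).2
        have hform : (factorAt C.v (n + 1) (pf γ + (nxt (pf γ) - 1 - (s + 1)))).reverse
            = factorAt C.v n (pf (eps γ) + (s + 1))
              ++ [C.v (pf γ + (nxt (pf γ) - 1 - (s + 1)))] := by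
          rw [factorAt_cons C.v n (pf γ + (nxt (pf γ) - 1 - (s + 1))), List.reverse_cons,
            show pf γ + (nxt (pf γ) - 1 - (s + 1)) + 1 = pf γ + (nxt (pf γ) - 1 - s)
              by omega, ← hiii]
        have hlets : C.v (pf (eps γ) + (s + 1) + n)
            = C.v (pf γ + (nxt (pf γ) - 1 - (s + 1))) := by
          apply huniq (factorAt C.v n (pf (eps γ) + (s + 1)))
            (factorAt_mem_LangN _ _ _) hynez
          · rw [← factorAt_concat]; exact factorAt_mem_Lang _ _ _
          · rw [← hform]
            exact hrev1 _ (factorAt_mem_LangN _ _ _)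
        refine ⟨hbound, ?_⟩
        rw [factorAt_concat C.v n (pf (eps γ) + (s + 1)), hlets, hform]
  have hmemletters : ∀ γ, z ++ [γ] ∈ Lang C.v → γ = C.a ∨ γ = C.b := by
    intro γ h
    exact C.letter_ab h (by simp)
  have FEIX : ∀ γ, z ++ [γ] ∈ Lang C.v → eps γ = γ := by
    have hex : ∃ γ0, (z ++ [γ0] ∈ Lang C.v) ∧ eps γ0 = γ0 := by
      obtain ⟨W, hWmem, hWpal⟩ := hpal1
      obtain ⟨γ0, s0, hγ0, hs0, hWe⟩ := F3 W hWmem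
      obtain ⟨hb5, he5⟩ := F5 γ0 hγ0 (nxt (pf γ0) - 1 - s0) (by omega)
      rw [show nxt (pf γ0) - 1 - (nxt (pf γ0) - 1 - s0) = s0 by omega] at he5
      have heq : factorAt C.v (n + 1) (pf (eps γ0) + (nxt (pf γ0) - 1 - s0))
          = factorAt C.v (n + 1) (pf γ0 + s0) := by
        rw [he5, ← hWe, hWpal, hWe]
      obtain ⟨h1, -⟩ := F4 _ _ _ _ (hepsz γ0 hγ0).2 hγ0 hb5 hs0 heq
      exact ⟨γ0, hγ0, h1⟩
    obtain ⟨γ0, hγ0, hfix⟩ := hex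
    intro γ hγ
    by_cases hgg : γ = γ0
    · rw [hgg]; exact hfix
    · have hγz : γ :: z ∈ Lang C.v := mem_lextF.1 (by
        rw [hzl]
        rcases hmemletters γ hγ with h | h <;> simp [h])
      have hγzN : γ :: z ∈ LangN C.v (n + 1) := ⟨by simp [hzlen], hγz⟩
      obtain ⟨δ, s, hδ, hslt, hform⟩ := F3 (γ :: z) hγzN
      have hcons : γ :: z = C.v (pf δ + s) :: factorAt C.v n (pf δ + s + 1) := by
        rw [hform, factorAt_cons]
      injection hcons with hγeq hzeq
      have hs1 : s + 1 = nxt (pf δ) := by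
        by_contra hne2
        exact nxt_min (pf δ) (s + 1) (by omega) (by omega) hzeq.symm
      have hγeps : eps δ = γ := by
        rw [hγeq]
        show C.v (pf δ + (nxt (pf δ) - 1)) = C.v (pf δ + s)
        rw [show nxt (pf δ) - 1 = s by omega]
      by_cases hdg : δ = γ
      · rw [← hdg, hγeps]
        exact hdg.symm
      · exfalso
        have hδl := hmemletters δ hδ
        have hγl := hmemletters γ hγ
        have hγ0l := hmemletters γ0 hγ0
        have hδγ0 : δ = γ0 := by
          rcases hδl with h1 | h1 <;> rcases hγl with h2 | h2 <;> rcases hγ0l with h3 | h3 <;>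
            first
            | (exact absurd (h1.trans h2.symm) hdg)
            | (exact absurd (h2.trans h3.symm) hgg)
            | (rw [h1, h3])
        rw [hδγ0, hfix] at hγeps
        exact hgg hγeps.symm
  intro α β hα hβ hne
  by_contra hban
  have hβmem : β = C.a ∨ β = C.b := by simpa using hβ
  have hαmem : α = C.a ∨ α = C.b := by simpa using hα
  have hβz : β :: z ∈ Lang C.v := mem_lextF.1 (by rw [hzl]; exact hβ)
  have hzβ : z ++ [β] ∈ Lang C.v := mem_rextF.1 (by rw [hzr]; exact hβ)
  have ht1 : 1 ≤ nxt (pf β) := (nxt_spec _).1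
  have step : ∀ q, factorAt C.v (n + 1) q = β :: z →
      factorAt C.v (n + 1) (q + nxt (pf β)) = β :: z ∧
      factorAt C.v (nxt (pf β) + n) (q + 1) = factorAt C.v (nxt (pf β) + n) (pf β) := by
    intro q hq
    have hcons := (factorAt_cons C.v n q).symm.trans hq
    injection hcons with hvq hq1
    have hδ : factorAt C.v (n + 1) (q + 1) = z ++ [C.v (q + 1 + n)] := by
      rw [factorAt_concat, hq1]
    have hδlang : β :: (z ++ [C.v (q + 1 + n)]) ∈ Lang C.v := by
      have h1 : factorAt C.v (n + 2) q = C.v q :: factorAt C.v (n + 1) (q + 1) :=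
        factorAt_cons C.v (n + 1) q
      rw [hδ, hvq] at h1
      rw [← h1]
      exact factorAt_mem_Lang _ _ _
    have hxl : C.v (q + 1 + n) = C.a ∨ C.v (q + 1 + n) = C.b := C.hv _
    have hxa : C.v (q + 1 + n) ≠ α := by
      intro hcon
      rw [hcon] at hδlang
      exact hban (by simpa using hδlang)
    have hletter : C.v (q + 1 + n) = β := by
      rcases hxl with h1 | h1 <;> rcases hβmem with h2 | h2
      · rw [h1, h2]
      · exfalso
        apply hxa
        rcases hαmem with h3 | h3
        · rw [h1, h3]
        · exact absurd (h3.trans h2.symm) hne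
      · exfalso
        apply hxa
        rcases hαmem with h3 | h3
        · exact absurd (h3.trans h2.symm) hne
        · rw [h1, h3]
      · rw [h1, h2]
    have hocc2 : factorAt C.v (n + 1) (q + 1) = z ++ [β] := by rw [hδ, hletter]
    have hdet := occ_det β hzβ (q + 1) hocc2
    constructor
    · have h3 := factorAt_sub hdet.2 (s := nxt (pf β) - 1) (k := n + 1) (by omega)
      rw [harr β hzβ] at h3
      have h4 : C.v (pf β + (nxt (pf β) - 1)) = β := FEIX β hzβ
      rw [h4, show q + 1 + (nxt (pf β) - 1) = q + nxt (pf β) by omega] at h3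
      exact h3.symm
    · exact hdet.2.symm
  obtain ⟨q0, -, hq0occ⟩ :=
    C.occursN_ge (⟨by simp [hzlen], hβz⟩ : β :: z ∈ LangN C.v (n + 1)) 0
  have hiter : ∀ k, factorAt C.v (n + 1) (q0 + k * nxt (pf β)) = β :: z := by
    intro k
    induction k with
    | zero => simpa using hq0occ.symm
    | succ k ih =>
      have h1 := (step _ ih).1
      rwa [show q0 + k * nxt (pf β) + nxt (pf β) = q0 + (k + 1) * nxt (pf β) by ring] at h1
  have hper : ∀ m, q0 + 1 ≤ m → C.v (m + nxt (pf β)) = C.v m := by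
    intro m hm
    have hrt : (m - (q0 + 1)) % nxt (pf β) < nxt (pf β) := Nat.mod_lt _ (by omega)
    have hdm : (m - (q0 + 1)) / nxt (pf β) * nxt (pf β) + (m - (q0 + 1)) % nxt (pf β)
        = m - (q0 + 1) := Nat.div_add_mod' _ _
    have hmul : ((m - (q0 + 1)) / nxt (pf β) + 1) * nxt (pf β)
        = ((m - (q0 + 1)) / nxt (pf β)) * nxt (pf β) + nxt (pf β) := by ring
    have hseg1 := (step _ (hiter ((m - (q0 + 1)) / nxt (pf β)))).2
    have hseg2 := (step _ (hiter ((m - (q0 + 1)) / nxt (pf β) + 1))).2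
    have e1 : C.v (q0 + (m - (q0 + 1)) / nxt (pf β) * nxt (pf β) + 1
        + (m - (q0 + 1)) % nxt (pf β)) = C.v (pf β + (m - (q0 + 1)) % nxt (pf β)) :=
      factorAt_entry_eq hseg1 (by omega)
    have e2 : C.v (q0 + ((m - (q0 + 1)) / nxt (pf β) + 1) * nxt (pf β) + 1
        + (m - (q0 + 1)) % nxt (pf β)) = C.v (pf β + (m - (q0 + 1)) % nxt (pf β)) :=
      factorAt_entry_eq hseg2 (by omega)
    have i1 : m + nxt (pf β) = q0 + ((m - (q0 + 1)) / nxt (pf β) + 1) * nxt (pf β) + 1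
        + (m - (q0 + 1)) % nxt (pf β) := by omega
    have i2 : m = q0 + (m - (q0 + 1)) / nxt (pf β) * nxt (pf β) + 1
        + (m - (q0 + 1)) % nxt (pf β) := by omega
    exact (congrArg C.v i1).trans (e2.trans (e1.symm.trans (congrArg C.v i2).symm))
  exact sturmian_not_evp C.hst ⟨q0 + 1, nxt (pf β), ht1, hper⟩


end SCtx

end AuxBispecial


/-! ### Closure and palindromic complexity: the master induction -/

section AuxMaster

set_option linter.unusedSectionVars false
set_option maxHeartbeats 1000000

variable {A : Type*}

attribute [local instance] Classical.propDecidable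

lemma nil_mem_Lang (u : ℕ → A) : ([] : List A) ∈ Lang u :=
  ⟨0, by simp [OccursAt, factorAt]⟩

namespace SCtx

variable [Finite A] (C : SCtx A)

def CLp (n : ℕ) : Prop := ∀ w ∈ LangN C.v n, w.reverse ∈ Lang C.v

def PalN (n : ℕ) : Set (List A) := {w | w ∈ LangN C.v n ∧ w.reverse = w}

def PCp (n : ℕ) : Prop := (C.PalN n).ncard = if Even n then 1 else 2

lemma CLp_zero : C.CLp 0 := by
  intro w hw
  rw [LangN_zero] at hw
  rw [Set.mem_singleton_iff] at hw
  rw [hw]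
  exact nil_mem_Lang C.v

lemma CLp_one : C.CLp 1 := by
  intro w hw
  obtain ⟨x, hx⟩ := List.length_eq_one_iff.1 hw.1
  rw [hx, List.reverse_singleton, ← hx]
  exact hw.2

lemma PCp_zero : C.PCp 0 := by
  have h1 : C.PalN 0 = {([] : List A)} := by
    ext w
    constructor
    · rintro ⟨hw, -⟩
      rw [LangN_zero] at hw
      exact hw
    · rintro rfl
      exact ⟨by rw [LangN_zero]; rfl, by simp⟩
  rw [PCp, h1]
  simp

lemma PCp_one : C.PCp 1 := by
  have h1 : C.PalN 1 = LangN C.v 1 := by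
    ext w
    constructor
    · rintro ⟨hw, -⟩; exact hw
    · intro hw
      refine ⟨hw, ?_⟩
      obtain ⟨x, hx⟩ := List.length_eq_one_iff.1 hw.1
      rw [hx, List.reverse_singleton]
  rw [PCp, h1, C.hC 1]
  norm_num

lemma master_step (n : ℕ)
    (ihCL0 : C.CLp n) (ihCL1 : C.CLp (n + 1))
    (ihPC0 : C.PCp n) (ihPC1 : C.PCp (n + 1)) :
    C.CLp (n + 2) ∧ C.PCp (n + 2) := by
  classical
  obtain ⟨z, hzmem, hzr2, hzuniq⟩ := C.urs n
  obtain ⟨zl, hzlmem, hzl2, hzluniq⟩ := C.uls n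
  have hrev1 : ∀ w ∈ LangN C.v (n + 1), w.reverse ∈ Lang C.v := ihCL1
  have hrevn : ∀ w ∈ LangN C.v n, w.reverse ∈ Lang C.v := ihCL0
  have hzrab : rextF C.v z = {C.a, C.b} := C.rextF_eq_ab hzr2
  have huniq : ∀ w ∈ LangN C.v n, w ≠ z → ∀ γ δ,
      w ++ [γ] ∈ Lang C.v → w ++ [δ] ∈ Lang C.v → γ = δ := by
    intro w hw hne γ δ h1 h2
    by_contra hgd
    exact hne (hzuniq w hw γ δ (mem_rextF.2 h1) (mem_rextF.2 h2) hgd)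
  -- if z is a palindrome or left special, it is bispecial, and then it is a palindrome
  have hLSpal : (lextF C.v z).card = 2 → z.reverse = z := by
    intro hls
    have hzrev : z.reverse ∈ LangN C.v n := ⟨by simp [hzmem.1], hrevn z hzmem⟩
    have h1 : z.reverse ++ [C.a] ∈ Lang C.v := by
      have h2 := hrev1 (C.a :: z)
        ⟨by simp [hzmem.1], mem_lextF.1 (by rw [C.lextF_eq_ab hls]; simp)⟩
      simpa using h2
    have h2 : z.reverse ++ [C.b] ∈ Lang C.v := by
      have h3 := hrev1 (C.b :: z)
        ⟨by simp [hzmem.1], mem_lextF.1 (by rw [C.lextF_eq_ab hls]; simp)⟩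
      simpa using h3
    exact hzuniq z.reverse hzrev C.a C.b (mem_rextF.2 h1) (mem_rextF.2 h2) C.hab
  have hpalLS : z.reverse = z → (lextF C.v z).card = 2 := by
    intro hpalz
    have hza : z ++ [C.a] ∈ Lang C.v := mem_rextF.1 (by rw [hzrab]; simp)
    have hzb : z ++ [C.b] ∈ Lang C.v := mem_rextF.1 (by rw [hzrab]; simp)
    have h1 : C.a :: z ∈ Lang C.v := by
      have h2 := hrev1 (z ++ [C.a]) ⟨by simp [hzmem.1], hza⟩
      rw [List.reverse_append, List.reverse_singleton, List.singleton_append, hpalz] at h2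
      exact h2
    have h2 : C.b :: z ∈ Lang C.v := by
      have h3 := hrev1 (z ++ [C.b]) ⟨by simp [hzmem.1], hzb⟩
      rw [List.reverse_append, List.reverse_singleton, List.singleton_append, hpalz] at h3
      exact h3
    have h3 : 1 < (lextF C.v z).card :=
      Finset.one_lt_card.2 ⟨C.a, mem_lextF.2 h1, C.b, mem_lextF.2 h2, C.hab⟩
    have h4 := C.lextF_card_le z
    omega
  have hCL2 : C.CLp (n + 2) := by
    intro W hW
    obtain ⟨α, β, m, hWe, hm, hαm, hmβ⟩ := exists_mid_of_mem hW
    have hrw : W.reverse = (β :: m.reverse) ++ [α] := by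
      rw [hWe, List.cons_append, List.reverse_cons, List.reverse_append,
        List.reverse_singleton, List.singleton_append, List.cons_append]
    rw [hrw]
    by_cases hmz : m = z
    · rw [hmz] at hαm hmβ
      rw [hmz]
      by_cases hls : (lextF C.v z).card = 2
      · -- bispecial case
        have hzzl : z = zl := by
          have h2 := C.lextF_eq_ab hls
          exact hzluniq z hzmem C.a C.b (by rw [h2]; simp) (by rw [h2]; simp) C.hab
        have hpalz : z.reverse = z := hLSpal hls
        have hulz : ∀ w ∈ LangN C.v n, ∀ γ δ,
            γ ∈ lextF C.v w → δ ∈ lextF C.v w → γ ≠ δ → w = z := by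
          intro w hw γ δ h1 h2 h3
          rw [hzzl]
          exact hzluniq w hw γ δ h1 h2 h3
        have hpal1 : ∃ W' ∈ LangN C.v (n + 1), W'.reverse = W' := by
          have h1 : (C.PalN (n + 1)).ncard = if Even (n + 1) then 1 else 2 := ihPC1
          have h2 : (C.PalN (n + 1)).ncard ≠ 0 := by
            rw [h1]; split <;> omega
          obtain ⟨W', hW'⟩ := Set.nonempty_of_ncard_ne_zero h2
          exact ⟨W', hW'.1, hW'.2⟩
        have hαl : α ∈ ({C.a, C.b} : Finset A) := by
          have h5 := C.letter_ab (x := α) hW.2 (by rw [hWe]; simp)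
          simpa using h5
        have hβl : β ∈ ({C.a, C.b} : Finset A) := by
          have h5 := C.letter_ab (x := β) hW.2 (by rw [hWe]; simp)
          simpa using h5
        by_cases hab2 : α = β
        · subst hab2
          rw [hpalz, ← hmz, ← hWe]
          exact hW.2
        · rw [hpalz]
          exact C.bispecial_offdiag hzmem hzrab (C.lextF_eq_ab hls) hpalz hzuniq hulz
            hrev1 hpal1 α β hαl hβl hab2
      · -- z right special but not left special
        have hls1 : ∀ γ δ, γ :: z ∈ Lang C.v → δ :: z ∈ Lang C.v → γ = δ := by
          intro γ δ h1 h2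
          by_contra hgd
          apply hls
          have h3 : 1 < (lextF C.v z).card :=
            Finset.one_lt_card.2 ⟨γ, mem_lextF.2 h1, δ, mem_lextF.2 h2, hgd⟩
          have h4 := C.lextF_card_le z
          omega
        have hnr : ∀ γ δ, z.reverse ++ [γ] ∈ Lang C.v → z.reverse ++ [δ] ∈ Lang C.v →
            γ = δ := by
          intro γ δ h1 h2
          apply hls1
          · have h3 := hrev1 _ ⟨by simp [hzmem.1], h1⟩
            rw [List.reverse_append, List.reverse_singleton, List.singleton_append,
              List.reverse_reverse] at h3
            exact h3
          · have h3 := hrev1 _ ⟨by simp [hzmem.1], h2⟩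
            rw [List.reverse_append, List.reverse_singleton, List.singleton_append,
              List.reverse_reverse] at h3
            exact h3
        have h1 : z.reverse ++ [α] ∈ Lang C.v := by
          have h2 := hrev1 (α :: z) hαm
          rw [List.reverse_cons] at h2
          exact h2
        have h2 : β :: z.reverse ∈ Lang C.v := by
          have h3 := hrev1 (z ++ [β]) hmβ
          rw [List.reverse_append, List.reverse_singleton, List.singleton_append] at h3
          exact h3
        have h2N : β :: z.reverse ∈ LangN C.v (n + 1) := ⟨by simp [hzmem.1], h2⟩
        obtain ⟨δ, hδ⟩ := extend_right_mem h2N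
        have h3 : z.reverse ++ [δ] ∈ Lang C.v := by
          have h4 := tail_mem_LangN hδ
          rw [List.cons_append, List.tail_cons] at h4
          exact h4.2
        have h5 : δ = α := hnr δ α h3 h1
        rw [← h5]
        exact hδ.2
    · -- m is not right special
      have h1 : m.reverse ++ [α] ∈ Lang C.v := by
        have h2 := hrev1 (α :: m) hαm
        rw [List.reverse_cons] at h2
        exact h2
      have h1N : m.reverse ++ [α] ∈ LangN C.v (n + 1) := ⟨by simp [hm.1], h1⟩
      obtain ⟨i, hi, hocc⟩ := C.occursN_ge h1N 1
      have h2 : C.v (i - 1) :: (m.reverse ++ [α]) ∈ Lang C.v := by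
        have h3 : factorAt C.v (n + 2) (i - 1)
            = C.v (i - 1) :: factorAt C.v (n + 1) i := by
          have h4 := factorAt_cons C.v (n + 1) (i - 1)
          rwa [show i - 1 + 1 = i by omega] at h4
        rw [hocc, ← h3]
        exact factorAt_mem_Lang _ _ _
      have h3 : C.v (i - 1) :: m.reverse ∈ Lang C.v := by
        have h4 : (C.v (i - 1) :: (m.reverse ++ [α])).dropLast
            = C.v (i - 1) :: m.reverse := by
          rw [show C.v (i - 1) :: (m.reverse ++ [α])
            = (C.v (i - 1) :: m.reverse) ++ [α] by rw [List.cons_append]]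
          rw [List.dropLast_concat]
        have h5 : C.v (i - 1) :: (m.reverse ++ [α]) ∈ LangN C.v (n + 2) :=
          ⟨by simp [hm.1], h2⟩
        have h6 := dropLast_mem_LangN h5
        rw [h4] at h6
        exact h6.2
      have h4 : m ++ [C.v (i - 1)] ∈ Lang C.v := by
        have h5 := hrev1 (C.v (i - 1) :: m.reverse) ⟨by simp [hm.1], h3⟩
        rw [List.reverse_cons, List.reverse_reverse] at h5
        exact h5
      have h5 : C.v (i - 1) = β := huniq m hm hmz _ _ h4 hmβ.2
      rw [← h5, List.cons_append]
      exact h2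
  refine ⟨hCL2, ?_⟩
  -- symmetry of two-sided extensions of z (when z is a palindrome)
  have hsym : z.reverse = z → ∀ p : A × A, p ∈ bextF C.v z → (p.2, p.1) ∈ bextF C.v z := by
    intro hpalz p hp
    have h1 := mem_bextF.1 hp
    have h2 := hCL2 _ ⟨by simp [hzmem.1], h1⟩
    apply mem_bextF.2
    rw [List.cons_append, List.reverse_cons, List.reverse_append, List.reverse_singleton,
      List.singleton_append, hpalz] at h2
    rw [List.cons_append] at h2 ⊢
    exact h2
  -- diagonal analysis at a bispecial palindrome
  have hdiag : z.reverse = z →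
      (∃ γ, (γ, γ) ∈ bextF C.v z) ∧
      (∀ δ δ', (δ, δ) ∈ bextF C.v z → (δ', δ') ∈ bextF C.v z → δ = δ') := by
    intro hpalz
    have hls2 := hpalLS hpalz
    have hbt := C.bext_three hzmem hls2 hzuniq
    have hlet : ∀ p : A × A, p ∈ bextF C.v z →
        (p.1 = C.a ∨ p.1 = C.b) ∧ (p.2 = C.a ∨ p.2 = C.b) := by
      intro p hp
      have h1 := mem_bextF.1 hp
      exact ⟨C.letter_ab (x := p.1) h1 (by simp), C.letter_ab (x := p.2) h1 (by simp)⟩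
    set Dz := (bextF C.v z).filter (fun p => p.1 = p.2) with hDz
    set Oz := (bextF C.v z).filter (fun p => ¬ p.1 = p.2) with hOz
    have hsplit : Dz.card + Oz.card = 3 := by
      rw [hDz, hOz, Finset.card_filter_add_card_filter_not]
      exact hbt
    have hOcases : Oz.card = 0 ∨ Oz.card = 2 := by
      by_cases hab2 : (C.a, C.b) ∈ bextF C.v z
      · right
        have hba : (C.b, C.a) ∈ bextF C.v z := hsym hpalz (C.a, C.b) hab2
        have hOeq : Oz = {(C.a, C.b), (C.b, C.a)} := by
          apply Finset.Subset.antisymm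
          · intro p hp
            rw [hOz, Finset.mem_filter] at hp
            obtain ⟨hp1, hp2⟩ := hp
            obtain ⟨ha1, ha2⟩ := hlet p hp1
            rcases ha1 with h | h <;> rcases ha2 with h' | h' <;>
              simp only [Finset.mem_insert, Finset.mem_singleton, Prod.ext_iff] <;>
              first
              | (exact absurd (h.trans h'.symm) hp2)
              | (exact Or.inl ⟨h, h'⟩)
              | (exact Or.inr ⟨h, h'⟩)
          · intro p hp
            rw [Finset.mem_insert, Finset.mem_singleton] at hp
            rw [hOz, Finset.mem_filter]
            rcases hp with rfl | rfl
            · exact ⟨hab2, by simpa using C.hab⟩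
            · exact ⟨hba, by simpa using C.hab.symm⟩
        rw [hOeq]
        rw [Finset.card_insert_of_notMem (by simp [Prod.ext_iff, C.hab]),
          Finset.card_singleton]
      · left
        rw [hOz, Finset.card_eq_zero, Finset.filter_eq_empty_iff]
        intro p hp
        obtain ⟨ha1, ha2⟩ := hlet p hp
        by_contra hne
        have hba : (C.b, C.a) ∉ bextF C.v z := by
          intro hcon
          exact hab2 (by simpa using hsym hpalz (C.b, C.a) hcon)
        rcases ha1 with h | h <;> rcases ha2 with h' | h'
        · exact hne (h.trans h'.symm)
        · apply hab2
          have : p = (C.a, C.b) := Prod.ext h h'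
          rwa [this] at hp
        · apply hba
          have : p = (C.b, C.a) := Prod.ext h h'
          rwa [this] at hp
        · exact hne (h.trans h'.symm)
    have hDsub : Dz ⊆ {(C.a, C.a), (C.b, C.b)} := by
      intro p hp
      rw [hDz, Finset.mem_filter] at hp
      obtain ⟨hp1, hp2⟩ := hp
      obtain ⟨ha1, -⟩ := hlet p hp1
      rcases ha1 with h | h
      · have hpe : p = (C.a, C.a) := Prod.ext h (hp2.symm.trans h)
        simp [hpe]
      · have hpe : p = (C.b, C.b) := Prod.ext h (hp2.symm.trans h)
        simp [hpe]
    have hDle : Dz.card ≤ 2 :=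
      le_trans (Finset.card_le_card hDsub)
        (le_trans (Finset.card_insert_le _ _) (by simp))
    have hDone : Dz.card = 1 := by rcases hOcases with h | h <;> omega
    obtain ⟨d, hd⟩ := Finset.card_eq_one.1 hDone
    constructor
    · refine ⟨d.1, ?_⟩
      have hdm : d ∈ Dz := by rw [hd]; exact Finset.mem_singleton_self d
      rw [hDz, Finset.mem_filter] at hdm
      have : d = (d.1, d.1) := by
        rw [Prod.ext_iff]
        exact ⟨rfl, hdm.2.symm⟩
      rw [← this]
      exact hdm.1
    · intro δ δ' h1 h2
      have hm1 : (δ, δ) ∈ Dz := by rw [hDz, Finset.mem_filter]; exact ⟨h1, rfl⟩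
      have hm2 : (δ', δ') ∈ Dz := by rw [hDz, Finset.mem_filter]; exact ⟨h2, rfl⟩
      rw [hd, Finset.mem_singleton] at hm1 hm2
      have := hm1.trans hm2.symm
      rw [Prod.ext_iff] at this
      exact this.1
  -- the palindrome bijection
  have hcore : ∀ W ∈ C.PalN (n + 2), ∃ (x : A) (m : List A),
      W = x :: m ++ [x] ∧ m ∈ LangN C.v n ∧ m.reverse = m ∧ W.tail.dropLast = m ∧
      x :: m ∈ LangN C.v (n + 1) ∧ m ++ [x] ∈ LangN C.v (n + 1) := by
    intro W hWp
    obtain ⟨x, y, m, hWe, hmN, hxm, hmy⟩ := exists_mid_of_mem hWp.1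
    have h2 := hWp.2
    rw [hWe, List.cons_append, List.reverse_cons, List.reverse_append,
      List.reverse_singleton, List.singleton_append, ← List.cons_append] at h2
    rw [List.cons_append] at h2
    injection h2 with hyx h3
    have hmrev : m.reverse = m := List.append_inj_left h3 (by simp)
    subst hyx
    refine ⟨y, m, by rw [hWe], hmN, hmrev, ?_, hxm, hmy⟩
    rw [hWe, List.cons_append, List.tail_cons, List.dropLast_concat]
  have hPC2 : C.PCp (n + 2) := by
    have hinj : Set.InjOn (fun W : List A => W.tail.dropLast) (C.PalN (n + 2)) := by
      intro W1 hW1 W2 hW2 hc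
      obtain ⟨x1, m1, he1, hm1, hp1, hc1, hl1, hr1⟩ := hcore W1 hW1
      obtain ⟨x2, m2, he2, hm2, hp2, hc2, hl2, hr2⟩ := hcore W2 hW2
      change W1.tail.dropLast = W2.tail.dropLast at hc
      rw [hc1, hc2] at hc
      subst hc
      by_cases hx : x1 = x2
      · rw [he1, he2, hx]
      · exfalso
        have hmz2 : m1 = z :=
          hzuniq m1 hm1 x1 x2 (mem_rextF.2 hr1.2) (mem_rextF.2 hr2.2) hx
        obtain ⟨-, huniqd⟩ := hdiag (by rw [← hmz2]; exact hp1)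
        apply hx
        apply huniqd
        · exact mem_bextF.2 (by rw [← hmz2, ← he1]; exact hW1.1.2)
        · exact mem_bextF.2 (by rw [← hmz2, ← he2]; exact hW2.1.2)
    have himg : (fun W : List A => W.tail.dropLast) '' C.PalN (n + 2) = C.PalN n := by
      apply Set.Subset.antisymm
      · rintro m' ⟨W, hWp, rfl⟩
        obtain ⟨x, m, hWe, hmN, hmrev, hc1, -, -⟩ := hcore W hWp
        show W.tail.dropLast ∈ C.PalN n
        rw [hc1]
        exact ⟨hmN, hmrev⟩
      · intro m hmp
        obtain ⟨hmN, hmrev⟩ := hmp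
        by_cases hmz : m = z
        · have hpalz : z.reverse = z := by rw [← hmz]; exact hmrev
          obtain ⟨⟨γ, hγ⟩, -⟩ := hdiag hpalz
          have h1 := mem_bextF.1 hγ
          refine ⟨γ :: z ++ [γ], ⟨⟨by simp [hzmem.1], h1⟩, ?_⟩, ?_⟩
          · rw [List.cons_append, List.reverse_cons, List.reverse_append,
              List.reverse_singleton, List.singleton_append, hpalz, List.cons_append]
          · show (γ :: z ++ [γ]).tail.dropLast = m
            simp only [List.cons_append, List.tail_cons, List.dropLast_concat]
            exact hmz.symm
        · obtain ⟨i, hi, hocc⟩ := C.occursN_ge hmN 1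
          have hext : factorAt C.v (n + 2) (i - 1)
              = C.v (i - 1) :: m ++ [C.v (i + n)] := by
            have h3 := factorAt_cons C.v (n + 1) (i - 1)
            rw [show i - 1 + 1 = i by omega] at h3
            rw [h3, factorAt_concat, ← hocc, List.cons_append]
          have hWlang : C.v (i - 1) :: m ++ [C.v (i + n)] ∈ Lang C.v := by
            rw [← hext]; exact factorAt_mem_Lang _ _ _
          have hαm : C.v (i - 1) :: m ∈ Lang C.v := by
            have h5 : C.v (i - 1) :: m ++ [C.v (i + n)] ∈ LangN C.v (n + 2) :=
              ⟨by simp [hmN.1], hWlang⟩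
            have h6 := dropLast_mem_LangN h5
            rw [show (C.v (i - 1) :: m ++ [C.v (i + n)]).dropLast = C.v (i - 1) :: m
              by rw [List.dropLast_concat]] at h6
            exact h6.2
          have hmβ : m ++ [C.v (i + n)] ∈ Lang C.v := by
            have h5 : C.v (i - 1) :: m ++ [C.v (i + n)] ∈ LangN C.v (n + 2) :=
              ⟨by simp [hmN.1], hWlang⟩
            have h6 := tail_mem_LangN h5
            rw [List.cons_append, List.tail_cons] at h6
            exact h6.2
          have h4 : m ++ [C.v (i - 1)] ∈ Lang C.v := by
            have h5 := hrev1 (C.v (i - 1) :: m) ⟨by simp [hmN.1], hαm⟩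
            rw [List.reverse_cons, hmrev] at h5
            exact h5
          have h5 : C.v (i - 1) = C.v (i + n) := huniq m hmN hmz _ _ h4 hmβ
          refine ⟨C.v (i - 1) :: m ++ [C.v (i - 1)], ⟨⟨by simp [hmN.1], ?_⟩, ?_⟩, ?_⟩
          · nth_rewrite 2 [h5]
            exact hWlang
          · rw [List.cons_append, List.reverse_cons, List.reverse_append,
              List.reverse_singleton, List.singleton_append, hmrev, List.cons_append]
          · show (C.v (i - 1) :: m ++ [C.v (i - 1)]).tail.dropLast = m
            simp only [List.cons_append, List.tail_cons, List.dropLast_concat]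
    have hcount : (C.PalN (n + 2)).ncard = (C.PalN n).ncard := by
      rw [← himg, Set.ncard_image_of_injOn hinj]
    have hpar : Even (n + 2) ↔ Even n := by
      constructor
      · intro h
        rcases h with ⟨k, hk⟩
        exact ⟨k - 1, by omega⟩
      · intro h
        rcases h with ⟨k, hk⟩
        exact ⟨k + 1, by omega⟩
    show (C.PalN (n + 2)).ncard = if Even (n + 2) then 1 else 2
    rw [hcount, ihPC0]
    by_cases he : Even n
    · rw [if_pos he, if_pos (hpar.2 he)]
    · rw [if_neg he, if_neg (fun hc => he (hpar.1 hc))]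
  exact hPC2

theorem master : ∀ n, C.CLp n ∧ C.PCp n := by
  intro n
  induction n using Nat.strong_induction_on with
  | _ n ih =>
    match n with
    | 0 => exact ⟨C.CLp_zero, C.PCp_zero⟩
    | 1 => exact ⟨C.CLp_one, C.PCp_one⟩
    | (n + 2) =>
      exact C.master_step n (ih n (by omega)).1 (ih (n + 1) (by omega)).1
        (ih n (by omega)).2 (ih (n + 1) (by omega)).2

end SCtx

end AuxMaster


/-! ### Counting reflective classes -/

section AuxQuot

set_option linter.unusedSectionVars false

variable {A : Type*}

attribute [local instance] Classical.propDecidable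

lemma reflEquiv_mk_eq {w w' : List A} :
    Quotient.mk (reflSetoid A) w = Quotient.mk (reflSetoid A) w' ↔ ReflEquiv w w' :=
  ⟨fun h => Quotient.exact h, fun h => Quotient.sound h⟩

lemma two_mul_nClasses : ∀ (k : ℕ) (S : Set (List A)), S.Finite → S.ncard = k →
    (∀ w ∈ S, w.reverse ∈ S) →
    2 * nClasses S = S.ncard + {w | w ∈ S ∧ w.reverse = w}.ncard := by
  intro k
  induction k using Nat.strong_induction_on with
  | _ k ih =>
    intro S hfin hcard hcl
    rcases Set.eq_empty_or_nonempty S with rfl | ⟨w, hw⟩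
    · simp [nClasses]
    have hk1 : 1 ≤ k := by
      rw [← hcard]
      exact (Set.ncard_pos hfin).2 ⟨w, hw⟩
    by_cases hpal : w.reverse = w
    · set S' := S \ {w} with hS'
      have hfin' : S'.Finite := hfin.diff
      have hcard' : S'.ncard = k - 1 := by
        rw [hS', Set.ncard_diff_singleton_of_mem hw, hcard]
      have hcl' : ∀ x ∈ S', x.reverse ∈ S' := by
        rintro x ⟨hx1, hx2⟩
        refine ⟨hcl x hx1, ?_⟩
        intro hc
        rw [Set.mem_singleton_iff] at hc
        apply hx2
        rw [Set.mem_singleton_iff]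
        have h3 : x = w.reverse := by
          rw [← hc, List.reverse_reverse]
        rw [h3, hpal]
      have hmain := ih (k - 1) (by omega) S' hfin' hcard' hcl'
      have himg : Quotient.mk (reflSetoid A) '' S
          = insert (Quotient.mk (reflSetoid A) w) (Quotient.mk (reflSetoid A) '' S') := by
        ext q
        constructor
        · rintro ⟨x, hx, rfl⟩
          by_cases hxw : x = w
          · left; rw [hxw]
          · right
            exact ⟨x, ⟨hx, by simpa using hxw⟩, rfl⟩
        · rintro (rfl | ⟨x, hx, rfl⟩)
          · exact ⟨w, hw, rfl⟩
          · exact ⟨x, hx.1, rfl⟩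
      have hnotmem : Quotient.mk (reflSetoid A) w ∉ Quotient.mk (reflSetoid A) '' S' := by
        rintro ⟨x, hx, hxq⟩
        have hre : ReflEquiv x w := reflEquiv_mk_eq.1 hxq
        rcases hre with rfl | hre
        · exact hx.2 rfl
        · rw [hpal] at hre
          exact hx.2 (by rw [Set.mem_singleton_iff, hre])
      have hQcard : nClasses S = nClasses S' + 1 := by
        rw [nClasses, himg, Set.ncard_insert_of_notMem hnotmem (hfin'.image _)]
        rfl
      have hpq : {x | x ∈ S ∧ x.reverse = x}
          = insert w {x | x ∈ S' ∧ x.reverse = x} := by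
        ext x
        constructor
        · rintro ⟨hx1, hx2⟩
          by_cases hxw : x = w
          · left; exact hxw
          · right; exact ⟨⟨hx1, by simpa using hxw⟩, hx2⟩
        · rintro (rfl | ⟨hx1, hx2⟩)
          · exact ⟨hw, hpal⟩
          · exact ⟨hx1.1, hx2⟩
      have hpfin : {x | x ∈ S' ∧ x.reverse = x}.Finite :=
        hfin'.subset (fun x hx => hx.1)
      have hpcard : {x | x ∈ S ∧ x.reverse = x}.ncard
          = {x | x ∈ S' ∧ x.reverse = x}.ncard + 1 := by
        rw [hpq, Set.ncard_insert_of_notMem (fun hc => hc.1.2 rfl) hpfin]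
      have hsc : S.ncard = S'.ncard + 1 := by omega
      omega
    · have hwrev : w.reverse ∈ S := hcl w hw
      set S' := S \ {w, w.reverse} with hS'
      have hfin' : S'.Finite := hfin.diff
      have hsub : ({w, w.reverse} : Set (List A)) ⊆ S := by
        rintro x (rfl | hx)
        · exact hw
        · rw [Set.mem_singleton_iff] at hx
          rw [hx]; exact hwrev
      have hpairc : ({w, w.reverse} : Set (List A)).ncard = 2 := by
        rw [Set.ncard_pair (fun hc => hpal hc.symm)]
      have hcard2 : S'.ncard + 2 = k := by
        rw [← hcard, ← hpairc, hS']
        exact Set.ncard_diff_add_ncard_of_subset hsub hfin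
      have hcl' : ∀ x ∈ S', x.reverse ∈ S' := by
        rintro x ⟨hx1, hx2⟩
        refine ⟨hcl x hx1, ?_⟩
        rintro (hc | hc)
        · apply hx2
          right
          rw [Set.mem_singleton_iff, ← hc, List.reverse_reverse]
        · rw [Set.mem_singleton_iff] at hc
          apply hx2
          left
          have := congrArg List.reverse hc
          rwa [List.reverse_reverse, List.reverse_reverse] at this
      have hmain := ih (k - 2) (by omega) S' hfin' (by omega) hcl'
      have himg : Quotient.mk (reflSetoid A) '' S
          = insert (Quotient.mk (reflSetoid A) w) (Quotient.mk (reflSetoid A) '' S') := by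
        ext q
        constructor
        · rintro ⟨x, hx, rfl⟩
          by_cases hxw : x = w
          · left; rw [hxw]
          · by_cases hxw2 : x = w.reverse
            · left
              rw [hxw2]
              exact reflEquiv_mk_eq.2 (Or.inr rfl)
            · right
              refine ⟨x, ⟨hx, ?_⟩, rfl⟩
              rintro (hc | hc)
              · exact hxw hc
              · rw [Set.mem_singleton_iff] at hc
                exact hxw2 hc
        · rintro (rfl | ⟨x, hx, rfl⟩)
          · exact ⟨w, hw, rfl⟩
          · exact ⟨x, hx.1, rfl⟩
      have hnotmem : Quotient.mk (reflSetoid A) w ∉ Quotient.mk (reflSetoid A) '' S' := by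
        rintro ⟨x, hx, hxq⟩
        have hre : ReflEquiv x w := reflEquiv_mk_eq.1 hxq
        rcases hre with rfl | hre
        · exact hx.2 (Or.inl rfl)
        · exact hx.2 (Or.inr (by rw [Set.mem_singleton_iff, hre]))
      have hQcard : nClasses S = nClasses S' + 1 := by
        rw [nClasses, himg, Set.ncard_insert_of_notMem hnotmem (hfin'.image _)]
        rfl
      have hpq : {x | x ∈ S ∧ x.reverse = x} = {x | x ∈ S' ∧ x.reverse = x} := by
        ext x
        constructor
        · rintro ⟨hx1, hx2⟩
          refine ⟨⟨hx1, ?_⟩, hx2⟩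
          rintro (hc | hc)
          · subst hc
            exact hpal hx2
          · rw [Set.mem_singleton_iff] at hc
            apply hpal
            rw [← hc, ← hx2, hc, List.reverse_reverse]
        · rintro ⟨hx1, hx2⟩
          exact ⟨hx1.1, hx2⟩
      rw [hQcard, hpq]
      omega
  
lemma nClasses_image_eq (f : List A → List A) (hf : Function.Injective f)
    (hrev : ∀ w : List A, (f w).reverse = f w.reverse) (S : Set (List A)) :
    nClasses (f '' S) = nClasses S := by
  classical
  have hpres : ∀ x y : List A, ReflEquiv x y → ReflEquiv (f x) (f y) := by
    intro x y h
    rcases h with rfl | h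
    · exact Or.inl rfl
    · right
      rw [h]
      exact (hrev y).symm
  set F : Quotient (reflSetoid A) → Quotient (reflSetoid A) :=
    Quotient.map f hpres with hF
  have hcomp : ∀ x : List A,
      Quotient.mk (reflSetoid A) (f x) = F (Quotient.mk (reflSetoid A) x) := by
    intro x
    rfl
  have himg : Quotient.mk (reflSetoid A) '' (f '' S)
      = F '' (Quotient.mk (reflSetoid A) '' S) := by
    rw [← Set.image_comp, ← Set.image_comp]
    apply Set.image_congr
    intro x _
    exact hcomp x
  have hFinj : Function.Injective F := by
    intro q1 q2
    induction q1 using Quotient.ind with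
    | _ x =>
      induction q2 using Quotient.ind with
      | _ y =>
        intro h
        have h2 : ReflEquiv (f x) (f y) := reflEquiv_mk_eq.1 h
        apply reflEquiv_mk_eq.2
        rcases h2 with h3 | h3
        · exact Or.inl (hf h3)
        · rw [hrev] at h3
          exact Or.inr (hf h3)
  rw [nClasses, himg, Set.ncard_image_of_injective _ hFinj]
  rfl

lemma nClasses_union_disjoint {S T : Set (List A)} (hS : S.Finite) (hT : T.Finite)
    (hd : Disjoint (Quotient.mk (reflSetoid A) '' S) (Quotient.mk (reflSetoid A) '' T)) :
    nClasses (S ∪ T) = nClasses S + nClasses T := by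
  rw [nClasses, Set.image_union, Set.ncard_union_eq hd (hS.image _) (hT.image _)]
  rfl

end AuxQuot


/-! ### Interleaving with a letter `c` -/

section AuxInterleave

set_option linter.unusedSectionVars false

variable {A : Type*}

def ivc (c : A) : List A → List A
  | [] => []
  | x :: t => x :: c :: ivc c t

def dvc (c : A) : List A → List A
  | [] => []
  | x :: t => c :: x :: dvc c t

def efm (c : A) (w : List A) : List A :=
  match w with
  | [] => []
  | x :: t => x :: dvc c t

def ofm (c : A) (y : List A) : List A := dvc c y ++ [c]

lemma dvc_append (c : A) (u₁ u₂ : List A) :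
    dvc c (u₁ ++ u₂) = dvc c u₁ ++ dvc c u₂ := by
  induction u₁ with
  | nil => rfl
  | cons x t ih =>
    show c :: x :: dvc c (t ++ u₂) = c :: x :: (dvc c t ++ dvc c u₂)
    rw [ih]

lemma cons_ivc_eq (c : A) (w : List A) : c :: ivc c w = dvc c w ++ [c] := by
  induction w with
  | nil => rfl
  | cons x t ih =>
    simp only [ivc, dvc, List.cons_append]
    rw [← ih]

lemma reverse_ivc (c : A) (w : List A) : (ivc c w).reverse = dvc c w.reverse := by
  induction w with
  | nil => rfl
  | cons x t ih =>
    simp only [ivc, List.reverse_cons, ih, dvc_append, List.append_assoc]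
    rfl

lemma reverse_dvc (c : A) (w : List A) : (dvc c w).reverse = ivc c w.reverse := by
  have h := reverse_ivc c w.reverse
  rw [List.reverse_reverse] at h
  rw [← h, List.reverse_reverse]

lemma length_ivc (c : A) (w : List A) : (ivc c w).length = 2 * w.length := by
  induction w with
  | nil => rfl
  | cons x t ih => simp [ivc, ih]; ring

lemma length_dvc (c : A) (w : List A) : (dvc c w).length = 2 * w.length := by
  induction w with
  | nil => rfl
  | cons x t ih => simp [dvc, ih]; ring

lemma length_efm (c : A) (x : A) (t : List A) :
    (efm c (x :: t)).length = 2 * t.length + 1 := by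
  simp [efm, length_dvc]

lemma length_ofm (c : A) (y : List A) : (ofm c y).length = 2 * y.length + 1 := by
  simp [ofm, length_dvc]

lemma ivc_inj (c : A) : ∀ w₁ w₂ : List A, ivc c w₁ = ivc c w₂ → w₁ = w₂ := by
  intro w₁
  induction w₁ with
  | nil =>
    intro w₂ h
    cases w₂ with
    | nil => rfl
    | cons y t => exact absurd h (by simp [ivc])
  | cons x t ih =>
    intro w₂ h
    cases w₂ with
    | nil => exact absurd h (by simp [ivc])
    | cons y s =>
      simp only [ivc] at h
      injection h with h1 h2
      injection h2 with h3 h4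
      rw [h1, ih s h4]

lemma dvc_inj (c : A) : ∀ w₁ w₂ : List A, dvc c w₁ = dvc c w₂ → w₁ = w₂ := by
  intro w₁
  induction w₁ with
  | nil =>
    intro w₂ h
    cases w₂ with
    | nil => rfl
    | cons y t => exact absurd h (by simp [dvc])
  | cons x t ih =>
    intro w₂ h
    cases w₂ with
    | nil => exact absurd h (by simp [dvc])
    | cons y s =>
      simp only [dvc] at h
      injection h with h1 h2
      injection h2 with h3 h4
      rw [h3, ih s h4]

lemma efm_concat (c : A) (u₁ : List A) (x : A) :
    efm c (u₁ ++ [x]) = ivc c u₁ ++ [x] := by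
  cases u₁ with
  | nil => rfl
  | cons y s =>
    simp only [List.cons_append, efm, ivc]
    rw [dvc_append]
    show y :: (dvc c s ++ [c, x]) = y :: c :: (ivc c s ++ [x])
    rw [show ([c, x] : List A) = [c] ++ [x] from rfl, ← List.append_assoc, ← cons_ivc_eq,
      List.cons_append]

lemma reverse_efm (c : A) (w : List A) : (efm c w).reverse = efm c w.reverse := by
  cases w with
  | nil => rfl
  | cons x t =>
    show (x :: dvc c t).reverse = efm c (x :: t).reverse
    rw [List.reverse_cons, reverse_dvc, List.reverse_cons, efm_concat]

lemma reverse_ofm (c : A) (y : List A) : (ofm c y).reverse = ofm c y.reverse := by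
  show (dvc c y ++ [c]).reverse = dvc c y.reverse ++ [c]
  rw [List.reverse_append, List.reverse_singleton, List.singleton_append, reverse_dvc,
    cons_ivc_eq]

lemma efm_inj (c : A) : ∀ w₁ w₂ : List A, efm c w₁ = efm c w₂ → w₁ = w₂ := by
  intro w₁ w₂ h
  cases w₁ with
  | nil =>
    cases w₂ with
    | nil => rfl
    | cons y s => exact absurd h (by simp [efm])
  | cons x t =>
    cases w₂ with
    | nil => exact absurd h (by simp [efm])
    | cons y s =>
      simp only [efm] at h
      injection h with h1 h2
      rw [h1, dvc_inj c t s h2]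

lemma ofm_inj (c : A) : ∀ w₁ w₂ : List A, ofm c w₁ = ofm c w₂ → w₁ = w₂ := by
  intro w₁ w₂ h
  have hlen : w₁.length = w₂.length := by
    have h2 := congrArg List.length h
    simp only [ofm, List.length_append, length_dvc] at h2
    omega
  apply dvc_inj c
  exact List.append_inj_left h (by simp [length_dvc, hlen])

/-- Interleaved factor identities. -/
lemma fa_even (u v : ℕ → A) (c : A) (hu : ∀ i, u (2 * i) = v i ∧ u (2 * i + 1) = c) :
    ∀ m i, factorAt u (2 * m) (2 * i) = ivc c (factorAt v m i) := by
  intro m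
  induction m with
  | zero => intro i; rfl
  | succ m ih =>
    intro i
    rw [show 2 * (m + 1) = 2 * m + 1 + 1 by ring]
    rw [factorAt_cons u (2 * m + 1) (2 * i), factorAt_cons u (2 * m) (2 * i + 1)]
    rw [show 2 * i + 1 + 1 = 2 * (i + 1) by ring]
    rw [ih (i + 1), factorAt_cons v m i, (hu i).1, (hu i).2]
    rfl

lemma fa_odd (u v : ℕ → A) (c : A) (hu : ∀ i, u (2 * i) = v i ∧ u (2 * i + 1) = c) :
    ∀ m i, factorAt u (2 * m) (2 * i + 1) = dvc c (factorAt v m (i + 1)) := by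
  intro m
  induction m with
  | zero => intro i; rfl
  | succ m ih =>
    intro i
    rw [show 2 * (m + 1) = 2 * m + 1 + 1 by ring]
    rw [factorAt_cons u (2 * m + 1) (2 * i + 1)]
    rw [show 2 * i + 1 + 1 = 2 * (i + 1) by ring]
    rw [factorAt_cons u (2 * m) (2 * (i + 1))]
    rw [ih (i + 1), (hu i).2, (hu (i + 1)).1, factorAt_cons v m (i + 1)]
    rfl

lemma fa_eodd (u v : ℕ → A) (c : A) (hu : ∀ i, u (2 * i) = v i ∧ u (2 * i + 1) = c) :
    ∀ m i, factorAt u (2 * m + 1) (2 * i) = efm c (factorAt v (m + 1) i) := by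
  intro m i
  rw [factorAt_concat u (2 * m) (2 * i), fa_even u v c hu,
    show 2 * i + 2 * m = 2 * (i + m) by ring, (hu (i + m)).1,
    factorAt_concat v m i, efm_concat]

lemma fa_oodd (u v : ℕ → A) (c : A) (hu : ∀ i, u (2 * i) = v i ∧ u (2 * i + 1) = c) :
    ∀ m i, factorAt u (2 * m + 1) (2 * i + 1) = dvc c (factorAt v m (i + 1)) ++ [c] := by
  intro m i
  rw [factorAt_concat u (2 * m) (2 * i + 1), fa_odd u v c hu,
    show 2 * i + 1 + 2 * m = 2 * (i + m) + 1 by ring, (hu (i + m)).2]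

end AuxInterleave


/-- if `v` is Sturmian over `{a,b}` and `u = π(v)` with `π : a ↦ ac, b ↦ bc`,
then `r_u(n+2) = r_u(n) + 1` for every `n`. -/
theorem stmt8 {A : Type*} [Fintype A] (a b c : A) (hab : a ≠ b) (hca : c ≠ a) (hcb : c ≠ b)
    (v : ℕ → A) (hv : ∀ i, v i = a ∨ v i = b) (hst : Sturmian v)
    (u : ℕ → A) (hu : ∀ i, u (2 * i) = v i ∧ u (2 * i + 1) = c) :
    ∀ n : ℕ, reflComplexity u (n + 2) = reflComplexity u n + 1 := by
  classical
  have hcl : ∀ k, ∀ w ∈ LangN v k, w.reverse ∈ Lang v :=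
    fun k => (SCtx.master ⟨v, a, b, hab, hv, hst⟩ k).1
  have hpalc : ∀ k, {w : List A | w ∈ LangN v k ∧ w.reverse = w}.ncard
      = if Even k then 1 else 2 :=
    fun k => (SCtx.master ⟨v, a, b, hab, hv, hst⟩ k).2
  have hocc1 : ∀ (k : ℕ) (w : List A), w ∈ LangN v k → ∀ N, ∃ i, N ≤ i ∧ w = factorAt v k i :=
    fun k w h N => SCtx.occursN_ge ⟨v, a, b, hab, hv, hst⟩ h N
  have hlet : ∀ w ∈ Lang v, ∀ x ∈ w, x ≠ c := by
    intro w hw x hx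
    obtain ⟨i, rfl⟩ := letters_mem hw hx
    rcases hv i with h | h <;> rw [h]
    · intro hc; exact hca hc.symm
    · intro hc; exact hcb hc.symm
  have hclN : ∀ k, ∀ y ∈ LangN v k, y.reverse ∈ LangN v k := by
    intro k y hy
    exact ⟨by simp [hy.1], hcl k y hy⟩
  have hfae := fa_even u v c hu
  have hfao := fa_odd u v c hu
  have hfeo := fa_eodd u v c hu
  have hfoo := fa_oodd u v c hu
  have hchar_even : ∀ (m : ℕ) (W : List A), W ∈ LangN u (2 * m) ↔
      ((∃ x ∈ LangN v m, W = ivc c x) ∨ (∃ y ∈ LangN v m, W = dvc c y)) := by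
    intro m W
    constructor
    · intro hW
      obtain ⟨j, rfl⟩ := mem_LangN_iff.1 hW
      obtain ⟨i, rfl | rfl⟩ := Nat.even_or_odd' j
      · exact Or.inl ⟨factorAt v m i, factorAt_mem_LangN v m i, hfae m i⟩
      · exact Or.inr ⟨factorAt v m (i + 1), factorAt_mem_LangN v m (i + 1), hfao m i⟩
    · rintro (⟨x, hx, rfl⟩ | ⟨y, hy, rfl⟩)
      · obtain ⟨i, hxi⟩ := mem_LangN_iff.1 hx
        rw [hxi, ← hfae m i]
        exact factorAt_mem_LangN u (2 * m) (2 * i)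
      · obtain ⟨i, hige, hyi⟩ := hocc1 m y hy 1
        rw [hyi, show i = i - 1 + 1 by omega, ← hfao m (i - 1)]
        exact factorAt_mem_LangN u (2 * m) (2 * (i - 1) + 1)
  have hchar_odd : ∀ (m : ℕ) (W : List A), W ∈ LangN u (2 * m + 1) ↔
      ((∃ x ∈ LangN v (m + 1), W = efm c x) ∨ (∃ y ∈ LangN v m, W = ofm c y)) := by
    intro m W
    constructor
    · intro hW
      obtain ⟨j, rfl⟩ := mem_LangN_iff.1 hW
      obtain ⟨i, rfl | rfl⟩ := Nat.even_or_odd' j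
      · exact Or.inl ⟨factorAt v (m + 1) i, factorAt_mem_LangN v (m + 1) i, hfeo m i⟩
      · exact Or.inr ⟨factorAt v m (i + 1), factorAt_mem_LangN v m (i + 1), hfoo m i⟩
    · rintro (⟨x, hx, rfl⟩ | ⟨y, hy, rfl⟩)
      · obtain ⟨i, hxi⟩ := mem_LangN_iff.1 hx
        rw [hxi, ← hfeo m i]
        exact factorAt_mem_LangN u (2 * m + 1) (2 * i)
      · obtain ⟨i, hige, hyi⟩ := hocc1 m y hy 1
        rw [hyi, show i = i - 1 + 1 by omega]
        show dvc c (factorAt v m (i - 1 + 1)) ++ [c] ∈ LangN u (2 * m + 1)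
        rw [← hfoo m (i - 1)]
        exact factorAt_mem_LangN u (2 * m + 1) (2 * (i - 1) + 1)
  have reven : ∀ m, reflComplexity u (2 * m) = m + 1 := by
    intro m
    have hset : Quotient.mk (reflSetoid A) '' LangN u (2 * m)
        = (fun x => Quotient.mk (reflSetoid A) (ivc c x)) '' LangN v m := by
      apply Set.Subset.antisymm
      · rintro q ⟨W, hW, rfl⟩
        rcases (hchar_even m W).1 hW with ⟨x, hx, rfl⟩ | ⟨y, hy, rfl⟩
        · exact ⟨x, hx, rfl⟩
        · refine ⟨y.reverse, hclN m y hy, ?_⟩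
          show Quotient.mk (reflSetoid A) (ivc c y.reverse)
            = Quotient.mk (reflSetoid A) (dvc c y)
          apply reflEquiv_mk_eq.2
          right
          rw [reverse_dvc]
      · rintro q ⟨x, hx, rfl⟩
        exact ⟨ivc c x, (hchar_even m (ivc c x)).2 (Or.inl ⟨x, hx, rfl⟩), rfl⟩
    have hinj : Set.InjOn (fun x => Quotient.mk (reflSetoid A) (ivc c x)) (LangN v m) := by
      intro x hx x' hx' h
      have h2 : ReflEquiv (ivc c x) (ivc c x') := reflEquiv_mk_eq.1 h
      rcases h2 with h3 | h3
      · exact ivc_inj c _ _ h3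
      · rw [reverse_ivc] at h3
        cases x with
        | nil =>
          have hm : 0 = m := hx.1
          have h4 : x'.length = 0 := by rw [hx'.1, ← hm]
          rw [List.length_eq_zero_iff] at h4
          rw [h4]
        | cons x0 t =>
          exfalso
          cases hrx : x'.reverse with
          | nil =>
            rw [hrx] at h3
            exact absurd h3 (by simp [ivc, dvc])
          | cons z0 zs =>
            rw [hrx] at h3
            simp only [ivc, dvc] at h3
            injection h3 with h4 h5
            exact hlet (x0 :: t) hx.2 x0 (by simp) h4
    show Set.ncard (Quotient.mk (reflSetoid A) '' LangN u (2 * m)) = m + 1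
    rw [hset, Set.ncard_image_of_injOn hinj]
    exact hst m
  have hNC : ∀ k, 2 * nClasses (LangN v k) = (k + 1) + (if Even k then 1 else 2) := by
    intro k
    have h1 := two_mul_nClasses ((LangN v k).ncard) (LangN v k) (finite_LangN v k) rfl
      (fun w hw => hclN k w hw)
    have h2 : (LangN v k).ncard = k + 1 := hst k
    rw [h1, h2, hpalc k]
  have hofm_head : ∀ y : List A, ∃ r, ofm c y = c :: r := by
    intro y
    cases y with
    | nil => exact ⟨[], rfl⟩
    | cons y0 s => exact ⟨(y0 :: dvc c s) ++ [c], rfl⟩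
  have hefm_head : ∀ x : List A, x ∈ Lang v → x ≠ [] →
      ∃ z0 zs, efm c x = z0 :: zs ∧ z0 ≠ c := by
    intro x hxl hne
    cases x with
    | nil => exact absurd rfl hne
    | cons x0 t => exact ⟨x0, dvc c t, rfl, hlet _ hxl x0 (by simp)⟩
  have rodd : ∀ m, reflComplexity u (2 * m + 1) = m + 3 := by
    intro m
    have hLeq : LangN u (2 * m + 1) = (efm c '' LangN v (m + 1)) ∪ (ofm c '' LangN v m) := by
      ext W
      rw [hchar_odd m W]
      constructor
      · rintro (⟨x, hx, rfl⟩ | ⟨y, hy, rfl⟩)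
        · exact Or.inl ⟨x, hx, rfl⟩
        · exact Or.inr ⟨y, hy, rfl⟩
      · rintro (⟨x, hx, rfl⟩ | ⟨y, hy, rfl⟩)
        · exact Or.inl ⟨x, hx, rfl⟩
        · exact Or.inr ⟨y, hy, rfl⟩
    have hdisj : Disjoint (Quotient.mk (reflSetoid A) '' (efm c '' LangN v (m + 1)))
        (Quotient.mk (reflSetoid A) '' (ofm c '' LangN v m)) := by
      rw [Set.disjoint_left]
      rintro q ⟨W1, ⟨x, hx, rfl⟩, rfl⟩ ⟨W2, ⟨y, hy, rfl⟩, hq⟩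
      have h2 : ReflEquiv (ofm c y) (efm c x) := reflEquiv_mk_eq.1 hq
      have hxne : x ≠ [] := by
        intro hc
        rw [hc] at hx
        exact absurd hx.1 (by simp)
      obtain ⟨z0, zs, he, hz0⟩ := hefm_head x hx.2 hxne
      rcases h2 with h3 | h3
      · obtain ⟨r, hr⟩ := hofm_head y
        rw [hr, he] at h3
        injection h3 with h4 h5
        exact hz0 h4.symm
      · rw [reverse_efm] at h3
        have hxrl : x.reverse ∈ Lang v := hcl (m + 1) x hx
        have hxrne : x.reverse ≠ [] := by
          intro hc
          apply hxne
          have := congrArg List.reverse hc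
          rwa [List.reverse_reverse] at this
        obtain ⟨w0, ws, he2, hw0⟩ := hefm_head x.reverse hxrl hxrne
        obtain ⟨r, hr⟩ := hofm_head y
        rw [hr, he2] at h3
        injection h3 with h4 h5
        exact hw0 h4.symm
    have hEn : nClasses (efm c '' LangN v (m + 1)) = nClasses (LangN v (m + 1)) :=
      nClasses_image_eq (efm c) (fun {w1 w2} h => efm_inj c w1 w2 h)
        (fun w => reverse_efm c w) _
    have hOn : nClasses (ofm c '' LangN v m) = nClasses (LangN v m) :=
      nClasses_image_eq (ofm c) (fun {w1 w2} h => ofm_inj c w1 w2 h)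
        (fun w => reverse_ofm c w) _
    have hfinE : (efm c '' LangN v (m + 1)).Finite := (finite_LangN v (m + 1)).image _
    have hfinO : (ofm c '' LangN v m).Finite := (finite_LangN v m).image _
    show nClasses (LangN u (2 * m + 1)) = m + 3
    rw [hLeq, nClasses_union_disjoint hfinE hfinO hdisj, hEn, hOn]
    have e1 := hNC (m + 1)
    have e2 := hNC m
    rcases Nat.even_or_odd m with he | ho
    · rw [if_pos he] at e2
      rw [if_neg (by simpa [Nat.even_add_one] using he)] at e1
      omega
    · rw [if_neg (Nat.not_even_iff_odd.2 ho)] at e2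
      rw [if_pos ho.add_one] at e1
      omega
  intro n
  obtain ⟨m, rfl | rfl⟩ := Nat.even_or_odd' n
  · rw [show 2 * m + 2 = 2 * (m + 1) by ring, reven (m + 1), reven m]
  · rw [show 2 * m + 1 + 2 = 2 * (m + 1) + 1 by ring, rodd (m + 1), rodd m]


end ReflPaper
end

section
/- Let u be a sequence over a finite alphabet, w a word, and c, e letters. Suppose wc is a left special factor of u and ew' is a right special factor of u, where w' = w or w' = w̄ (i.e., w' is reflectively equivalent to w). If T(w) = 2, then w' = w̄, e = c, and there exist two distinct letters a, b such that Bext(w) ∪ Bext(w̄) = {awc, bwc, cw̄a, cw̄b}. -/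
namespace ReflPaper

variable {A : Type*}

lemma cons_append_singleton_inj {A : Type*} {v v' : List A} {p q p' q' : A}
    (hlen : v.length = v'.length)
    (h : p :: (v ++ [q]) = p' :: (v' ++ [q'])) :
    p = p' ∧ v = v' ∧ q = q' := by
  simp only [List.cons.injEq] at h
  obtain ⟨h1, h2⟩ := h
  obtain ⟨h3, h4⟩ := List.append_inj h2 hlen
  simp only [List.cons.injEq, and_true] at h4
  exact ⟨h1, h3, h4⟩

/-- if `wc` is left special, `ew'` is right special with `w'` reflectively
equivalent to `w`, and `T(w) = 2`, then `w' = w̄`, `e = c` and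
`Bext(w) ∪ Bext(w̄) = {awc, bwc, cw̄a, cw̄b}` for some distinct letters `a, b`. -/
theorem stmt11 {A : Type*} [Fintype A] (u : ℕ → A) (w w' : List A) (c e : A)
    (hL : LeftSpecial u (w ++ [c]))
    (hw' : w' = w ∨ w' = w.reverse)
    (hR : RightSpecial u (e :: w'))
    (hT : TT u w = 2) :
    w' = w.reverse ∧ e = c ∧ ∃ a b : A, a ≠ b ∧
      Bext u w ∪ Bext u w.reverse =
        {a :: (w ++ [c]), b :: (w ++ [c]),
         c :: (w.reverse ++ [a]), c :: (w.reverse ++ [b])} := by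
  classical
  obtain ⟨a, b, hab, ha, hb⟩ := hL
  have hBa : a :: (w ++ [c]) ∈ Bext u w ∪ Bext u w.reverse :=
    Or.inl ⟨ha, a, c, rfl⟩
  have hBb : b :: (w ++ [c]) ∈ Bext u w ∪ Bext u w.reverse :=
    Or.inl ⟨hb, b, c, rfl⟩
  unfold TT nClasses at hT
  rw [Set.ncard_eq_two] at hT
  obtain ⟨p, q, hpq, hset⟩ := hT
  have hrevA : (a :: (w ++ [c])).reverse = c :: (w.reverse ++ [a]) := by simp
  have hrevB : (b :: (w ++ [c])).reverse = c :: (w.reverse ++ [b]) := by simp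
  have hne : Quotient.mk (reflSetoid A) (a :: (w ++ [c]))
      ≠ Quotient.mk (reflSetoid A) (b :: (w ++ [c])) := by
    intro h
    have h' := Quotient.exact h
    rcases h' with h' | h'
    · simp only [List.cons.injEq] at h'
      exact hab h'.1
    · rw [hrevB] at h'
      obtain ⟨h1, _, h3⟩ := cons_append_singleton_inj (by simp) h'
      exact hab (h1.trans h3)
  have hmemA : Quotient.mk (reflSetoid A) (a :: (w ++ [c])) ∈ ({p, q} : Set _) :=
    hset ▸ Set.mem_image_of_mem _ hBa
  have hmemB : Quotient.mk (reflSetoid A) (b :: (w ++ [c])) ∈ ({p, q} : Set _) :=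
    hset ▸ Set.mem_image_of_mem _ hBb
  have key : ∀ z ∈ Bext u w ∪ Bext u w.reverse,
      z = a :: (w ++ [c]) ∨ z = c :: (w.reverse ++ [a]) ∨
      z = b :: (w ++ [c]) ∨ z = c :: (w.reverse ++ [b]) := by
    intro z hz
    have hmemZ : Quotient.mk (reflSetoid A) z ∈ ({p, q} : Set _) :=
      hset ▸ Set.mem_image_of_mem _ hz
    have hza : Quotient.mk (reflSetoid A) z = Quotient.mk (reflSetoid A) (a :: (w ++ [c])) ∨
        Quotient.mk (reflSetoid A) z = Quotient.mk (reflSetoid A) (b :: (w ++ [c])) := by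
      simp only [Set.mem_insert_iff, Set.mem_singleton_iff] at hmemA hmemB hmemZ
      rcases hmemA with h1 | h1 <;> rcases hmemB with h2 | h2 <;>
        rcases hmemZ with h3 | h3 <;> simp_all
    rcases hza with h | h
    · rcases Quotient.exact h with h' | h'
      · exact Or.inl h'
      · rw [hrevA] at h'; exact Or.inr (Or.inl h')
    · rcases Quotient.exact h with h' | h'
      · exact Or.inr (Or.inr (Or.inl h'))
      · rw [hrevB] at h'; exact Or.inr (Or.inr (Or.inr h'))
  obtain ⟨x, y, hxy, hx, hy⟩ := hR
  have hwlen : w'.length = w.length := by rcases hw' with h | h <;> simp [h]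
  have hmem : ∀ t : A, (e :: w') ++ [t] ∈ Lang u →
      e :: (w' ++ [t]) ∈ Bext u w ∪ Bext u w.reverse := by
    intro t ht
    rcases hw' with h | h
    · exact Or.inl ⟨ht, e, t, by rw [h]⟩
    · exact Or.inr ⟨ht, e, t, by rw [h]⟩
  have conv : ∀ t : A, (e :: w') ++ [t] ∈ Lang u →
      (e = a ∧ w' = w ∧ t = c) ∨ (e = c ∧ w' = w.reverse ∧ t = a) ∨
      (e = b ∧ w' = w ∧ t = c) ∨ (e = c ∧ w' = w.reverse ∧ t = b) := by
    intro t ht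
    rcases key _ (hmem t ht) with h | h | h | h
    · exact Or.inl (cons_append_singleton_inj hwlen h)
    · exact Or.inr (Or.inl (cons_append_singleton_inj (by simp [hwlen]) h))
    · exact Or.inr (Or.inr (Or.inl (cons_append_singleton_inj hwlen h)))
    · exact Or.inr (Or.inr (Or.inr (cons_append_singleton_inj (by simp [hwlen]) h)))
  have H : w' = w.reverse ∧ e = c ∧
      c :: (w.reverse ++ [a]) ∈ Lang u ∧ c :: (w.reverse ++ [b]) ∈ Lang u := by
    have Dx := conv x hx
    have Dy := conv y hy
    have hx' : e :: (w' ++ [x]) ∈ Lang u := hx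
    have hy' : e :: (w' ++ [y]) ∈ Lang u := hy
    clear hx hy
    rcases Dx with ⟨he1, hw1, ht1⟩ | ⟨he1, hw1, ht1⟩ | ⟨he1, hw1, ht1⟩ | ⟨he1, hw1, ht1⟩ <;>
      rcases Dy with ⟨he2, hw2, ht2⟩ | ⟨he2, hw2, ht2⟩ | ⟨he2, hw2, ht2⟩ | ⟨he2, hw2, ht2⟩
    -- (1,1)
    · exact absurd (ht1.trans ht2.symm) hxy
    -- (1,2)
    · exact absurd ((ht1.trans (he2.symm.trans he1)).trans ht2.symm) hxy
    -- (1,3)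
    · exact absurd (ht1.trans ht2.symm) hxy
    -- (1,4)
    · have hac : a = c := he1.symm.trans he2
      have hrw : w.reverse = w := hw2.symm.trans hw1
      refine ⟨hw2, he2, ?_, ?_⟩
      · rw [hrw, hac]; rw [hac] at ha; exact ha
      · rw [hrw]; rw [he2, hw1, ht2] at hy'; exact hy'
    -- (2,1)
    · exact absurd ((ht1.trans (he2.symm.trans he1)).trans ht2.symm) hxy
    -- (2,2)
    · exact absurd (ht1.trans ht2.symm) hxy
    -- (2,3)
    · have hbc : b = c := he2.symm.trans he1
      have hrw : w.reverse = w := hw1.symm.trans hw2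
      refine ⟨hw1, he1, ?_, ?_⟩
      · rw [he1, hw1, ht1] at hx'; exact hx'
      · rw [hrw, hbc]; rw [hbc] at hb; exact hb
    -- (2,4)
    · refine ⟨hw1, he1, ?_, ?_⟩
      · rw [he1, hw1, ht1] at hx'; exact hx'
      · rw [he2, hw2, ht2] at hy'; exact hy'
    -- (3,1)
    · exact absurd (ht1.trans ht2.symm) hxy
    -- (3,2)
    · have hbc : b = c := he1.symm.trans he2
      have hrw : w.reverse = w := hw2.symm.trans hw1
      refine ⟨hw2, he2, ?_, ?_⟩
      · rw [he2, hw2, ht2] at hy'; exact hy'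
      · rw [hrw, hbc]; rw [hbc] at hb; exact hb
    -- (3,3)
    · exact absurd (ht1.trans ht2.symm) hxy
    -- (3,4)
    · exact absurd ((ht1.trans (he2.symm.trans he1)).trans ht2.symm) hxy
    -- (4,1)
    · have hac : a = c := he2.symm.trans he1
      have hrw : w.reverse = w := hw1.symm.trans hw2
      refine ⟨hw1, he1, ?_, ?_⟩
      · rw [hrw, hac]; rw [hac] at ha; exact ha
      · rw [he1, hw1, ht1] at hx'; exact hx'
    -- (4,2)
    · refine ⟨hw1, he1, ?_, ?_⟩
      · rw [he2, hw2, ht2] at hy'; exact hy'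
      · rw [he1, hw1, ht1] at hx'; exact hx'
    -- (4,3)
    · exact absurd ((ht1.trans (he2.symm.trans he1)).trans ht2.symm) hxy
    -- (4,4)
    · exact absurd (ht1.trans ht2.symm) hxy
  obtain ⟨Heq, Hec, Ha, Hb⟩ := H
  refine ⟨Heq, Hec, a, b, hab, ?_⟩
  apply Set.eq_of_subset_of_subset
  · intro z hz
    rcases key z hz with h | h | h | h <;> simp [h]
  · intro z hz
    simp only [Set.mem_insert_iff, Set.mem_singleton_iff] at hz
    rcases hz with h | h | h | h <;> subst h
    · exact Or.inl ⟨ha, a, c, rfl⟩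
    · exact Or.inl ⟨hb, b, c, rfl⟩
    · exact Or.inr ⟨Ha, c, a, rfl⟩
    · exact Or.inr ⟨Hb, c, b, rfl⟩

end ReflPaper
end
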